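/- arXiv:1807.04719 — 3 statements merged into one kernel-verified Lean document; each statement's English description precedes it below -/
import Mathlib

section
/- There exist positive constants c, C and K such that for every n ≥ 2, for G ~ G(n, λ/n), the probability that G has a connected component whose number of vertices lies in the interval [C·log n, c·n] is at most K·n^{−100}. -/
open MeasureTheory Real
open scoped ENNReal Classical

noncomputable instance {n : ℕ} : MeasurableSpace (SimpleGraph (Fin n)) := ⊤

/-- The simple graph determined by an edge-indicator configuration on unordered pairs. -/
def confGraph (n : ℕ) (ω : Sym2 (Fin n) → Bool) : SimpleGraph (Fin n) where
  Adj x y := x ≠ y ∧ ω s(x, y) = true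
  symm := ⟨fun x y h => ⟨h.1.symm, by rw [Sym2.eq_swap]; exact h.2⟩⟩
  loopless := ⟨fun x h => h.1 rfl⟩

/-- The law of the Erdős–Rényi random graph `G(n,p)`: the pushforward, under the map sending
an edge-indicator configuration to the corresponding simple graph, of the product of
Bernoulli(p) measures. -/
noncomputable def erMeasure (n : ℕ) (p : ℝ) : Measure (SimpleGraph (Fin n)) :=
  Measure.map (confGraph n)
    (Measure.pi fun _ : Sym2 (Fin n) =>
      (PMF.bernoulli (min (Real.toNNReal p) 1) (min_le_right _ _)).toMeasure)

open Nat

section Comb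
variable {n : ℕ}

noncomputable def Eout (S : Finset (Fin n)) : Finset (Sym2 (Fin n)) :=
  (S ×ˢ Sᶜ).image (fun ab => s(ab.1, ab.2))

noncomputable def Tset (S : Finset (Fin n)) (v : Fin n) (f : ∀ a ∈ S.erase v, Fin n) :
    Finset (Sym2 (Fin n)) :=
  (S.erase v).attach.image (fun x => s(x.1, f x.1 x.2))

noncomputable def Fs (S : Finset (Fin n)) (v : Fin n) : Finset (∀ a ∈ S.erase v, Fin n) :=
  ((S.erase v).pi (fun _ => S)).filter
    (fun f => ∀ x hx y hy, s(x, f x hx) = s(y, f y hy) → x = y)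

lemma Fs_card_le (S : Finset (Fin n)) (v : Fin n) (hv : v ∈ S) :
    (Fs S v).card ≤ S.card ^ (S.card - 1) := by
  calc (Fs S v).card ≤ ((S.erase v).pi (fun _ => S)).card := Finset.card_filter_le _ _
    _ = S.card ^ (S.card - 1) := by
        rw [Finset.card_pi, Finset.prod_const, Finset.card_erase_of_mem hv]

lemma Tset_card {S : Finset (Fin n)} {v : Fin n} {f : ∀ a ∈ S.erase v, Fin n}
    (hf : f ∈ Fs S v) (hv : v ∈ S) : (Tset S v f).card = S.card - 1 := by
  have hinj := (Finset.mem_filter.mp hf).2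
  rw [Tset, Finset.card_image_of_injective _ ?_, Finset.card_attach,
    Finset.card_erase_of_mem hv]
  rintro ⟨x, hx⟩ ⟨y, hy⟩ h
  exact Subtype.ext (hinj x hx y hy h)

lemma Eout_card (S : Finset (Fin n)) : (Eout S).card = S.card * (n - S.card) := by
  rw [Eout, Finset.card_image_of_injOn ?_, Finset.card_product, Finset.card_compl,
    Fintype.card_fin]
  rintro ⟨a, b⟩ hab ⟨c, d⟩ hcd h
  simp only [Finset.mem_coe, Finset.mem_product, Finset.mem_compl] at hab hcd
  simp only [Sym2.eq_iff] at h
  rcases h with ⟨rfl, rfl⟩ | ⟨rfl, rfl⟩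
  · rfl
  · exact absurd hab.1 hcd.2

lemma TE_disjoint {S : Finset (Fin n)} {v : Fin n} {f : ∀ a ∈ S.erase v, Fin n}
    (hf : f ∈ Fs S v) : Disjoint (Tset S v f) (Eout S) := by
  have hpi := Finset.mem_pi.mp (Finset.mem_filter.mp hf).1
  rw [Finset.disjoint_left]
  intro e heT heE
  simp only [Tset, Finset.mem_image, Finset.mem_attach, true_and, Subtype.exists] at heT
  obtain ⟨x, hx, rfl⟩ := heT
  simp only [Eout, Finset.mem_image, Finset.mem_product, Prod.exists] at heE
  obtain ⟨a, b, ⟨haS, hbS⟩, hab⟩ := heE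
  rw [Finset.mem_compl] at hbS
  have hxS : x ∈ S := Finset.mem_of_mem_erase hx
  have hfxS : f x hx ∈ S := hpi x hx
  rw [Sym2.eq_iff] at hab
  rcases hab with ⟨rfl, rfl⟩ | ⟨rfl, rfl⟩
  · exact hbS hfxS
  · exact hbS hxS

lemma exists_parent (G : SimpleGraph (Fin n)) (v : Fin n) :
    ∃ f : Fin n → Fin n, ∀ x, G.connectedComponentMk x = G.connectedComponentMk v → x ≠ v →
      G.Adj x (f x) ∧ G.dist (f x) v + 1 = G.dist x v := by
  have H : ∀ x : Fin n, ∃ u : Fin n,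
      G.connectedComponentMk x = G.connectedComponentMk v → x ≠ v →
        G.Adj x u ∧ G.dist u v + 1 = G.dist x v := by
    intro x
    by_cases hx : G.connectedComponentMk x = G.connectedComponentMk v ∧ x ≠ v
    · obtain ⟨hcc, hne⟩ := hx
      have hreach : G.Reachable x v := SimpleGraph.ConnectedComponent.eq.mp hcc
      have hdist : G.dist x v ≠ 0 := (hreach.pos_dist_of_ne hne).ne'
      obtain ⟨w, hw⟩ := SimpleGraph.exists_walk_of_dist_ne_zero hdist
      cases w with
      | nil => simp at hw; omega
      | @cons _ u _ hadj w' =>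
        refine ⟨u, fun _ _ => ⟨hadj, ?_⟩⟩
        have h1 : G.dist u v ≤ w'.length := SimpleGraph.dist_le w'
        have h2 : w'.length + 1 = G.dist x v := by simpa using hw
        obtain ⟨p, hp⟩ := w'.reachable.exists_walk_length_eq_dist
        have h3 : G.dist x v ≤ G.dist u v + 1 := by
          have := SimpleGraph.dist_le (SimpleGraph.Walk.cons hadj p)
          simpa [hp] using this
        omega
    · exact ⟨x, fun h1 h2 => absurd ⟨h1, h2⟩ hx⟩
  choose f hf using H
  exact ⟨f, hf⟩

lemma bad_subset (a b : ℝ) :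
    (confGraph n) ⁻¹' {G : SimpleGraph (Fin n) | ∃ v : Fin n,
        a ≤ ((G.connectedComponentMk v).supp.ncard : ℝ) ∧
          ((G.connectedComponentMk v).supp.ncard : ℝ) ≤ b}
    ⊆ ⋃ v ∈ (Finset.univ : Finset (Fin n)),
        ⋃ S ∈ Finset.univ.powerset.filter
          (fun S : Finset (Fin n) => v ∈ S ∧ a ≤ (S.card : ℝ) ∧ (S.card : ℝ) ≤ b),
          ⋃ f ∈ Fs S v,
            {ω | (∀ e ∈ Tset S v f, ω e = true) ∧ ∀ e ∈ Eout S, ω e = false} := by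
  intro ω hω
  obtain ⟨v, h1, h2⟩ := hω
  set G := confGraph n ω with hG
  set S := (G.connectedComponentMk v).supp.toFinset with hS
  have hmem : ∀ x, x ∈ S ↔ G.connectedComponentMk x = G.connectedComponentMk v := by
    intro x; simp [hS, Set.mem_toFinset]
  have hcard : (G.connectedComponentMk v).supp.ncard = S.card :=
    Set.ncard_eq_toFinset_card' _
  obtain ⟨f₀, hf₀⟩ := exists_parent G v
  have herase : ∀ x, x ∈ S.erase v → G.connectedComponentMk x = G.connectedComponentMk v ∧ x ≠ v := by
    intro x hx
    rw [Finset.mem_erase] at hx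
    exact ⟨(hmem x).mp hx.2, hx.1⟩
  have hadj : ∀ x (hx : x ∈ S.erase v), G.Adj x (f₀ x) := by
    intro x hx; exact (hf₀ x (herase x hx).1 (herase x hx).2).1
  have hdist : ∀ x (hx : x ∈ S.erase v), G.dist (f₀ x) v + 1 = G.dist x v := by
    intro x hx; exact (hf₀ x (herase x hx).1 (herase x hx).2).2
  have hvS : v ∈ S := (hmem v).mpr rfl
  have hSfil : S ∈ Finset.univ.powerset.filter
      (fun S : Finset (Fin n) => v ∈ S ∧ a ≤ (S.card : ℝ) ∧ (S.card : ℝ) ≤ b) := by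
    rw [Finset.mem_filter]
    rw [hcard] at h1 h2
    exact ⟨Finset.mem_powerset.mpr (Finset.subset_univ _), hvS, h1, h2⟩
  refine Set.mem_biUnion (Finset.mem_univ v) (Set.mem_biUnion hSfil ?_)
  have hfFs : (fun x (hx : x ∈ S.erase v) => f₀ x) ∈ Fs S v := by
    rw [Fs, Finset.mem_filter, Finset.mem_pi]
    constructor
    · intro x hx
      have : G.connectedComponentMk (f₀ x) = G.connectedComponentMk x :=
        (SimpleGraph.ConnectedComponent.connectedComponentMk_eq_of_adj (hadj x hx)).symm
      exact (hmem _).mpr (this.trans (herase x hx).1)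
    · intro x hx y hy heq
      rw [Sym2.eq_iff] at heq
      rcases heq with ⟨h, _⟩ | ⟨hxy, hyx⟩
      · exact h
      · have d1 := hdist x hx
        have d2 := hdist y hy
        have hxy' : x = f₀ y := hxy
        have hyx' : f₀ x = y := hyx
        rw [hyx'] at d1
        rw [← hxy'] at d2
        omega
  refine Set.mem_biUnion hfFs ?_
  · constructor
    · intro e he
      simp only [Tset, Finset.mem_image, Finset.mem_attach, true_and, Subtype.exists] at he
      obtain ⟨x, hx, rfl⟩ := he
      exact (hadj x hx).2
    · intro e he
      simp only [Eout, Finset.mem_image, Finset.mem_product, Prod.exists] at he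
      obtain ⟨x, y, ⟨hxS, hyS⟩, rfl⟩ := he
      rw [Finset.mem_compl] at hyS
      cases hωe : ω s(x, y) with
      | false => rfl
      | true =>
        have hne : x ≠ y := fun h => hyS (h ▸ hxS)
        have : G.Adj x y := ⟨hne, hωe⟩
        have : G.connectedComponentMk y = G.connectedComponentMk v :=
          (SimpleGraph.ConnectedComponent.connectedComponentMk_eq_of_adj this).symm.trans ((hmem x).mp hxS)
        exact absurd ((hmem y).mpr this) hyS

end Comb

section MeasureBound
variable {n : ℕ} (q : NNReal) (hq : q ≤ 1)

lemma cyl_measure (T E : Finset (Sym2 (Fin n))) (hTE : Disjoint T E) :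
    Measure.pi (fun _ : Sym2 (Fin n) => (PMF.bernoulli q hq).toMeasure)
      {ω | (∀ e ∈ T, ω e = true) ∧ ∀ e ∈ E, ω e = false}
      = (q : ℝ≥0∞) ^ T.card * (1 - (q : ℝ≥0∞)) ^ E.card := by
  have hset : {ω : Sym2 (Fin n) → Bool | (∀ e ∈ T, ω e = true) ∧ ∀ e ∈ E, ω e = false}
      = Set.pi Set.univ (fun e => if e ∈ T then {true} else if e ∈ E then {false} else Set.univ) := by
    ext ω
    simp only [Set.mem_setOf_eq, Set.mem_pi, Set.mem_univ, forall_true_left]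
    constructor
    · rintro ⟨h1, h2⟩ e
      split_ifs with he1 he2
      · simp [h1 e he1]
      · simp [h2 e he2]
      · trivial
    · intro h
      constructor
      · intro e he
        have := h e; rw [if_pos he] at this; simpa using this
      · intro e he
        have := h e
        rw [if_neg (fun hc => (Finset.disjoint_left.mp hTE) hc he), if_pos he] at this
        simpa using this
  rw [hset, Measure.pi_pi]
  have hval : ∀ e : Sym2 (Fin n),
      (PMF.bernoulli q hq).toMeasure (if e ∈ T then {true} else if e ∈ E then {false} else Set.univ)
      = (if e ∈ T then (q : ℝ≥0∞) else if e ∈ E then 1 - (q : ℝ≥0∞) else 1) := by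
    intro e
    split_ifs
    · rw [PMF.toMeasure_apply_singleton _ _ (measurableSet_singleton _)]; rfl
    · rw [PMF.toMeasure_apply_singleton _ _ (measurableSet_singleton _), PMF.bernoulli_apply]
      simp [ENNReal.coe_sub]
    · have : IsProbabilityMeasure (PMF.bernoulli q hq).toMeasure :=
        PMF.toMeasure.isProbabilityMeasure _
      exact measure_univ
  rw [Finset.prod_congr rfl (fun e _ => hval e)]
  rw [← Finset.prod_mul_prod_compl T]
  have h1 : ∏ e ∈ T, (if e ∈ T then (q : ℝ≥0∞) else if e ∈ E then 1 - (q : ℝ≥0∞) else 1) = (q : ℝ≥0∞) ^ T.card := by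
    rw [Finset.prod_congr rfl (fun e he => if_pos he), Finset.prod_const]
  have h2 : ∏ e ∈ Tᶜ, (if e ∈ T then (q : ℝ≥0∞) else if e ∈ E then 1 - (q : ℝ≥0∞) else 1) = (1 - (q : ℝ≥0∞)) ^ E.card := by
    rw [Finset.prod_congr rfl (fun e he => if_neg (by simpa using (Finset.mem_compl.mp he)))]
    rw [Finset.prod_ite_mem, Finset.inter_comm, Finset.inter_eq_left.mpr ?_, Finset.prod_const]
    intro e he
    exact Finset.mem_compl.mpr (fun hc => (Finset.disjoint_left.mp hTE) hc he)
  rw [h1, h2]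

noncomputable def gk (n : ℕ) (q : ℝ≥0∞) (a b : ℝ) (k : ℕ) : ℝ≥0∞ :=
  if a ≤ (k : ℝ) ∧ (k : ℝ) ≤ b then
    (k : ℝ≥0∞) ^ (k - 1) * (q ^ (k - 1) * (1 - q) ^ (k * (n - k))) else 0

lemma measure_bad_le (a b : ℝ) :
    Measure.pi (fun _ : Sym2 (Fin n) => (PMF.bernoulli q hq).toMeasure)
      ((confGraph n) ⁻¹' {G : SimpleGraph (Fin n) | ∃ v : Fin n,
        a ≤ ((G.connectedComponentMk v).supp.ncard : ℝ) ∧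
          ((G.connectedComponentMk v).supp.ncard : ℝ) ≤ b})
    ≤ (n : ℝ≥0∞) * ∑ k ∈ Finset.range (n + 1), (n.choose k : ℝ≥0∞) * gk n q a b k := by
  set μ := Measure.pi (fun _ : Sym2 (Fin n) => (PMF.bernoulli q hq).toMeasure)
  set P := fun S : Finset (Fin n) => fun v : Fin n =>
    v ∈ S ∧ a ≤ (S.card : ℝ) ∧ (S.card : ℝ) ≤ b
  calc μ _ ≤ μ (⋃ v ∈ (Finset.univ : Finset (Fin n)),
        ⋃ S ∈ Finset.univ.powerset.filter (fun S : Finset (Fin n) => P S v),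
          ⋃ f ∈ Fs S v,
            {ω | (∀ e ∈ Tset S v f, ω e = true) ∧ ∀ e ∈ Eout S, ω e = false}) :=
        measure_mono (bad_subset a b)
    _ ≤ ∑ v ∈ (Finset.univ : Finset (Fin n)),
        μ (⋃ S ∈ Finset.univ.powerset.filter (fun S : Finset (Fin n) => P S v),
          ⋃ f ∈ Fs S v,
            {ω | (∀ e ∈ Tset S v f, ω e = true) ∧ ∀ e ∈ Eout S, ω e = false}) :=
        measure_biUnion_finset_le _ _
    _ ≤ ∑ v ∈ (Finset.univ : Finset (Fin n)), ∑ k ∈ Finset.range (n + 1),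
          (n.choose k : ℝ≥0∞) * gk n q a b k := ?_
    _ = (n : ℝ≥0∞) * ∑ k ∈ Finset.range (n + 1), (n.choose k : ℝ≥0∞) * gk n q a b k := by
        rw [Finset.sum_const, Finset.card_univ, Fintype.card_fin, nsmul_eq_mul]
  refine Finset.sum_le_sum fun v _ => ?_
  calc μ (⋃ S ∈ Finset.univ.powerset.filter (fun S : Finset (Fin n) => P S v),
          ⋃ f ∈ Fs S v,
            {ω | (∀ e ∈ Tset S v f, ω e = true) ∧ ∀ e ∈ Eout S, ω e = false})
      ≤ ∑ S ∈ Finset.univ.powerset.filter (fun S : Finset (Fin n) => P S v),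
          μ (⋃ f ∈ Fs S v,
            {ω | (∀ e ∈ Tset S v f, ω e = true) ∧ ∀ e ∈ Eout S, ω e = false}) :=
        measure_biUnion_finset_le _ _
    _ ≤ ∑ S ∈ Finset.univ.powerset.filter (fun S : Finset (Fin n) => P S v),
          gk n q a b S.card := ?_
    _ ≤ ∑ S ∈ Finset.univ.powerset, gk n q a b S.card :=
        Finset.sum_le_sum_of_subset (Finset.filter_subset _ _)
    _ = ∑ k ∈ Finset.range (n + 1), (n.choose k : ℝ≥0∞) * gk n q a b k := ?_
  · refine Finset.sum_le_sum fun S hS => ?_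
    rw [Finset.mem_filter] at hS
    obtain ⟨-, hvS, hab1, hab2⟩ := hS
    calc μ (⋃ f ∈ Fs S v,
            {ω | (∀ e ∈ Tset S v f, ω e = true) ∧ ∀ e ∈ Eout S, ω e = false})
        ≤ ∑ f ∈ Fs S v,
            μ {ω | (∀ e ∈ Tset S v f, ω e = true) ∧ ∀ e ∈ Eout S, ω e = false} :=
          measure_biUnion_finset_le _ _
      _ = ∑ f ∈ Fs S v, (q : ℝ≥0∞) ^ (S.card - 1) * (1 - (q : ℝ≥0∞)) ^ (S.card * (n - S.card)) := by
          refine Finset.sum_congr rfl fun f hf => ?_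
          rw [cyl_measure q hq _ _ (TE_disjoint hf), Tset_card hf hvS, Eout_card]
      _ = (Fs S v).card • ((q : ℝ≥0∞) ^ (S.card - 1) * (1 - (q : ℝ≥0∞)) ^ (S.card * (n - S.card))) :=
          Finset.sum_const _
      _ ≤ (S.card ^ (S.card - 1) : ℕ) • ((q : ℝ≥0∞) ^ (S.card - 1) * (1 - (q : ℝ≥0∞)) ^ (S.card * (n - S.card))) :=
          smul_le_smul_of_nonneg_right (by exact_mod_cast Fs_card_le S v hvS) (by positivity)
      _ = gk n q a b S.card := by
          rw [gk, if_pos ⟨hab1, hab2⟩, nsmul_eq_mul]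
          push_cast
          ring
  · rw [Finset.sum_powerset]
    rw [Finset.card_univ, Fintype.card_fin]
    refine Finset.sum_congr rfl fun k hk => ?_
    have : ∀ S ∈ Finset.powersetCard k (Finset.univ : Finset (Fin n)),
        gk n q a b S.card = gk n q a b k := by
      intro S hS
      rw [(Finset.mem_powersetCard.mp hS).2]
    rw [Finset.sum_congr rfl this, Finset.sum_const, Finset.card_powersetCard,
      Finset.card_univ, Fintype.card_fin, nsmul_eq_mul]

end MeasureBound

lemma term_bound (lam : ℝ) (hlam : 1 < lam) (n k : ℕ) (hn : 2 ≤ n) (hk : k ≤ n)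
    (hC : (206 / (lam - 1 - Real.log lam)) * Real.log n ≤ (k : ℝ))
    (hc : (k : ℝ) ≤ ((lam - 1 - Real.log lam) / (2 * lam)) * n) :
    (n.choose k : ℝ) * ((k : ℝ) ^ (k - 1) * ((lam / n) ^ (k - 1) * exp (-(lam / n)) ^ (k * (n - k))))
      ≤ (n : ℝ) * (1 / (n : ℝ) ^ 103) := by
  have hlam0 : (0 : ℝ) < lam := by linarith
  set δ : ℝ := (lam - 1 - Real.log lam) / 2 with hδdef
  have hδ : 0 < δ := by
    have := Real.log_lt_sub_one_of_pos hlam0 (ne_of_gt hlam)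
    simp only [hδdef]; linarith
  have hn1 : (1 : ℝ) < n := by exact_mod_cast hn
  have hnpos : (0 : ℝ) < n := by linarith
  have hlogn : 0 < Real.log n := Real.log_pos hn1
  have h2δ : 0 < lam - 1 - Real.log lam := by
    have := Real.log_lt_sub_one_of_pos hlam0 (ne_of_gt hlam); linarith
  have hCpos : 0 < 206 / (lam - 1 - Real.log lam) := div_pos (by norm_num) h2δ
  have hkposR : (0 : ℝ) < k := lt_of_lt_of_le (mul_pos hCpos hlogn) hC
  have hk1 : 1 ≤ k := by exact_mod_cast hkposR
  have hkR1 : (1 : ℝ) ≤ k := by exact_mod_cast hk1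
  -- binomial and k^k bounds
  have hchoose : (n.choose k : ℝ) ≤ (n : ℝ) ^ k / k ! := Nat.choose_le_pow_div k n
  have hkk : (k : ℝ) ^ k ≤ exp k * k ! := by
    have h1 : (k : ℝ) ^ k / k ! ≤ exp k := by
      refine le_trans (Finset.single_le_sum (f := fun i => (k : ℝ) ^ i / i !)
        (fun i _ => by positivity) (Finset.self_mem_range_succ k)) ?_
      exact Real.sum_le_exp_of_nonneg hkposR.le (k + 1)
    rw [div_le_iff₀ (by positivity)] at h1
    exact h1
  have hkk1 : (k : ℝ) ^ (k - 1) ≤ (k : ℝ) ^ k :=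
    pow_le_pow_right₀ hkR1 (by omega)
  -- the exponential factor
  have hexpfac : exp (-(lam / n)) ^ (k * (n - k)) ≤ exp (-lam * k + δ * k) := by
    rw [← Real.exp_nat_mul]
    apply Real.exp_le_exp.mpr
    have hMcast : ((k * (n - k) : ℕ) : ℝ) = (k : ℝ) * ((n : ℝ) - k) := by
      push_cast [Nat.cast_sub hk]; ring
    rw [hMcast]
    have hck : (k : ℝ) * k ≤ (δ / lam) * n * k := by
      have h0 : (lam - 1 - Real.log lam) / (2 * lam) = δ / lam := by
        rw [hδdef]; field_simp
      have h1 : (k : ℝ) ≤ (δ / lam) * n := h0 ▸ hc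
      nlinarith
    have hkey : lam * (k * k) ≤ δ * k * n := by
      have := mul_le_mul_of_nonneg_left hck hlam0.le
      calc lam * ((k:ℝ) * k) ≤ lam * ((δ / lam) * n * k) := this
        _ = δ * k * n := by field_simp
    have expand : (k : ℝ) * ((n : ℝ) - k) * -(lam / n) = -lam * k + lam * (k * k) / n := by
      field_simp; ring
    rw [expand]
    have : lam * ((k:ℝ) * k) / n ≤ δ * k := by
      rw [div_le_iff₀ hnpos]; linarith [hkey]
    linarith
  -- power juggling
  have hpow : (n : ℝ) ^ k * (lam / n) ^ (k - 1) = (n : ℝ) * lam ^ (k - 1) := by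
    have hk' : k = (k - 1) + 1 := by omega
    rw [div_pow, hk', pow_succ]
    field_simp
    rw [show k - 1 + 1 - 1 = k - 1 by omega]
  have hlampow : lam ^ (k - 1) ≤ lam ^ k :=
    pow_le_pow_right₀ (by linarith : (1:ℝ) ≤ lam) (by omega)
  have hfac : (0:ℝ) < (k ! : ℝ) := by exact_mod_cast k.factorial_pos
  have hkdivfac : ((k:ℝ) ^ k / (k ! : ℝ)) ≤ exp k := by
    rw [div_le_iff₀ hfac]; exact hkk
  have hexps : lam ^ k * (exp k * exp (-lam * k + δ * k)) = exp (-δ * k) := by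
    have hl : lam ^ k = exp ((k : ℝ) * Real.log lam) := by
      rw [Real.exp_nat_mul, Real.exp_log hlam0]
    have hek : exp (k : ℝ) = exp ((k:ℝ) * 1) := by rw [mul_one]
    rw [hl, hek, ← Real.exp_add, ← Real.exp_add]
    congr 1
    rw [hδdef]; ring
  have hfinal : exp (-δ * k) ≤ 1 / (n:ℝ) ^ 103 := by
    have h103 : (103:ℝ) * Real.log n ≤ δ * k := by
      have h0 : 206 / (lam - 1 - Real.log lam) = 103 / δ := by
        rw [hδdef]; field_simp; ring
      rw [h0] at hC
      have := mul_le_mul_of_nonneg_left hC hδ.le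
      calc (103:ℝ) * Real.log n = δ * (103 / δ * Real.log n) := by field_simp
        _ ≤ δ * k := this
    have hpow103 : (n:ℝ) ^ 103 ≤ exp (δ * k) := by
      calc (n:ℝ) ^ 103 = exp ((103:ℕ) * Real.log n) := by
            rw [Real.exp_nat_mul, Real.exp_log hnpos]
        _ ≤ exp (δ * k) := Real.exp_le_exp.mpr (by exact_mod_cast h103)
    rw [neg_mul, Real.exp_neg]
    rw [one_div]
    exact inv_anti₀ (by positivity) hpow103
  calc (n.choose k : ℝ) * ((k : ℝ) ^ (k - 1) * ((lam / n) ^ (k - 1) * exp (-(lam / n)) ^ (k * (n - k))))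
      ≤ ((n:ℝ) ^ k / (k ! : ℝ)) * ((k:ℝ) ^ k * ((lam / n) ^ (k - 1) * exp (-lam * k + δ * k))) := by
        refine mul_le_mul hchoose ?_ (by positivity) (by positivity)
        refine mul_le_mul hkk1 ?_ (by positivity) (by positivity)
        exact mul_le_mul_of_nonneg_left hexpfac (by positivity)
    _ = ((n:ℝ) ^ k * (lam / n) ^ (k - 1)) * (((k:ℝ) ^ k / (k ! : ℝ)) * exp (-lam * k + δ * k)) := by
        ring
    _ ≤ ((n:ℝ) * lam ^ (k - 1)) * (exp k * exp (-lam * k + δ * k)) := by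
        rw [hpow]
        refine mul_le_mul_of_nonneg_left ?_ (by positivity)
        exact mul_le_mul_of_nonneg_right hkdivfac (by positivity)
    _ ≤ ((n:ℝ) * lam ^ k) * (exp k * exp (-lam * k + δ * k)) := by
        refine mul_le_mul_of_nonneg_right ?_ (by positivity)
        exact mul_le_mul_of_nonneg_left hlampow hnpos.le
    _ = (n:ℝ) * (lam ^ k * (exp k * exp (-lam * k + δ * k))) := by ring
    _ = (n:ℝ) * exp (-δ * k) := by rw [hexps]
    _ ≤ (n : ℝ) * (1 / (n : ℝ) ^ 103) := mul_le_mul_of_nonneg_left hfinal hnpos.le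

lemma sum_real_bound (lam : ℝ) (hlam : 1 < lam) (n : ℕ) (hn : 2 ≤ n) :
    (n:ℝ) * ∑ k ∈ Finset.range (n+1), (n.choose k : ℝ) *
      (if (206/(lam-1-Real.log lam)) * Real.log n ≤ (k:ℝ) ∧
          (k:ℝ) ≤ ((lam-1-Real.log lam)/(2*lam)) * n then
        (k:ℝ)^(k-1) * ((lam/n)^(k-1) * Real.exp (-(lam/n))^(k*(n-k))) else 0)
      ≤ 2 / (n:ℝ)^100 := by
  have hn1 : (1:ℝ) < n := by exact_mod_cast hn
  have hnpos : (0:ℝ) < n := by linarith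
  have hterm : ∀ k ∈ Finset.range (n+1), (n.choose k : ℝ) *
      (if (206/(lam-1-Real.log lam)) * Real.log n ≤ (k:ℝ) ∧
          (k:ℝ) ≤ ((lam-1-Real.log lam)/(2*lam)) * n then
        (k:ℝ)^(k-1) * ((lam/n)^(k-1) * Real.exp (-(lam/n))^(k*(n-k))) else 0)
      ≤ (n:ℝ) * (1 / (n:ℝ)^103) := by
    intro k hk
    have hkn : k ≤ n := by
      rw [Finset.mem_range] at hk; omega
    split_ifs with hcond
    · exact term_bound lam hlam n k hn hkn hcond.1 hcond.2
    · rw [mul_zero]; positivity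
  have hsum : ∑ k ∈ Finset.range (n+1), (n.choose k : ℝ) *
      (if (206/(lam-1-Real.log lam)) * Real.log n ≤ (k:ℝ) ∧
          (k:ℝ) ≤ ((lam-1-Real.log lam)/(2*lam)) * n then
        (k:ℝ)^(k-1) * ((lam/n)^(k-1) * Real.exp (-(lam/n))^(k*(n-k))) else 0)
      ≤ ((n:ℝ)+1) * ((n:ℝ) * (1 / (n:ℝ)^103)) := by
    have := Finset.sum_le_card_nsmul _ _ _ hterm
    rw [Finset.card_range, nsmul_eq_mul] at this
    exact_mod_cast this
  have h2n : (n:ℝ) + 1 ≤ 2 * n := by linarith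
  calc (n:ℝ) * ∑ k ∈ Finset.range (n+1), _ ≤ (n:ℝ) * (((n:ℝ)+1) * ((n:ℝ) * (1 / (n:ℝ)^103))) :=
        mul_le_mul_of_nonneg_left hsum hnpos.le
    _ ≤ (n:ℝ) * ((2*(n:ℝ)) * ((n:ℝ) * (1 / (n:ℝ)^103))) := by
        refine mul_le_mul_of_nonneg_left ?_ hnpos.le
        refine mul_le_mul_of_nonneg_right h2n (by positivity)
    _ = 2 / (n:ℝ)^100 := by
        rw [show (103:ℕ) = 3+100 by norm_num, pow_add]
        field_simp


lemma coe_min_toNNReal (p : ℝ) :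
    ((min p.toNNReal 1 : NNReal) : ℝ≥0∞) = min (ENNReal.ofReal p) 1 := by
  rw [ENNReal.coe_min]; rfl

lemma one_sub_min_le (p : ℝ) (hp : 0 ≤ p) :
    1 - min (ENNReal.ofReal p) 1 ≤ ENNReal.ofReal (Real.exp (-p)) := by
  rcases le_total (ENNReal.ofReal p) 1 with h | h
  · rw [min_eq_left h]
    have h1 : (1 : ℝ≥0∞) - ENNReal.ofReal p = ENNReal.ofReal (1 - p) := by
      rw [ENNReal.ofReal_sub 1 hp, ENNReal.ofReal_one]
    rw [h1]
    refine ENNReal.ofReal_le_ofReal ?_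
    have := Real.add_one_le_exp (-p)
    linarith
  · rw [min_eq_right h]
    simp

lemma gk_le_ofReal (n : ℕ) (p : ℝ) (hp : 0 ≤ p) (a b : ℝ) (k : ℕ) :
    gk n (min (ENNReal.ofReal p) 1) a b k ≤
      ENNReal.ofReal (if a ≤ (k:ℝ) ∧ (k:ℝ) ≤ b then
        (k:ℝ)^(k-1) * (p^(k-1) * Real.exp (-p)^(k*(n-k))) else 0) := by
  rw [gk]
  split_ifs with hcond
  · rw [ENNReal.ofReal_mul (by positivity), ENNReal.ofReal_mul (by positivity)]
    refine mul_le_mul' (le_of_eq ?_) (mul_le_mul' ?_ ?_)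
    · rw [ENNReal.ofReal_pow (by positivity), ENNReal.ofReal_natCast]
    · rw [ENNReal.ofReal_pow hp]
      exact pow_le_pow_left' (min_le_left _ _) _
    · rw [ENNReal.ofReal_pow (by positivity)]
      exact pow_le_pow_left' (one_sub_min_le p hp) _
  · simp

/-- No component of `G(n, λ/n)` has size in `[C log n, c n]`, except with probability
`O(n⁻¹⁰⁰)`. -/
theorem er_no_middle_component (lam : ℝ) (hlam : 1 < lam) :
    ∃ c C K : ℝ, 0 < c ∧ 0 < C ∧ 0 < K ∧ ∀ n : ℕ, 2 ≤ n →
      erMeasure n (lam / n)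
          {G : SimpleGraph (Fin n) | ∃ v : Fin n,
            C * Real.log n ≤ ((G.connectedComponentMk v).supp.ncard : ℝ) ∧
              ((G.connectedComponentMk v).supp.ncard : ℝ) ≤ c * n} ≤
        ENNReal.ofReal (K / (n : ℝ) ^ 100) := by
  have hlam0 : (0:ℝ) < lam := by linarith
  have h2δ : 0 < lam - 1 - Real.log lam := by
    have := Real.log_lt_sub_one_of_pos hlam0 (ne_of_gt hlam); linarith
  refine ⟨(lam - 1 - Real.log lam) / (2 * lam), 206 / (lam - 1 - Real.log lam), 2,
    by positivity, by positivity, by norm_num, ?_⟩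
  intro n hn
  have hn1 : (1:ℝ) < n := by exact_mod_cast hn
  have hnpos : (0:ℝ) < n := by linarith
  have hp : (0:ℝ) ≤ lam / n := by positivity
  set a : ℝ := 206 / (lam - 1 - Real.log lam) * Real.log n with ha
  set b : ℝ := (lam - 1 - Real.log lam) / (2 * lam) * n with hb
  rw [erMeasure, Measure.map_apply (measurable_of_countable _)
    (MeasurableSpace.measurableSet_top)]
  have hbad := measure_bad_le (n := n) (min (Real.toNNReal (lam / (n:ℝ))) 1)
    (min_le_right _ _) a b
  rw [coe_min_toNNReal] at hbad
  refine le_trans hbad ?_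
  have hstep : ∀ k ∈ Finset.range (n+1),
      (n.choose k : ℝ≥0∞) * gk n (min (ENNReal.ofReal (lam / n)) 1) a b k ≤
        ENNReal.ofReal ((n.choose k : ℝ) * (if a ≤ (k:ℝ) ∧ (k:ℝ) ≤ b then
          (k:ℝ)^(k-1) * ((lam/n)^(k-1) * Real.exp (-(lam/n))^(k*(n-k))) else 0)) := by
    intro k _
    rw [ENNReal.ofReal_mul (by positivity)]
    rw [ENNReal.ofReal_natCast]
    exact mul_le_mul' le_rfl (gk_le_ofReal n (lam/n) hp a b k)
  calc (n : ℝ≥0∞) * ∑ k ∈ Finset.range (n + 1),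
        (n.choose k : ℝ≥0∞) * gk n (min (ENNReal.ofReal (lam / n)) 1) a b k
      ≤ (n : ℝ≥0∞) * ∑ k ∈ Finset.range (n + 1),
        ENNReal.ofReal ((n.choose k : ℝ) * (if a ≤ (k:ℝ) ∧ (k:ℝ) ≤ b then
          (k:ℝ)^(k-1) * ((lam/n)^(k-1) * Real.exp (-(lam/n))^(k*(n-k))) else 0)) :=
        mul_le_mul' le_rfl (Finset.sum_le_sum hstep)
    _ = ENNReal.ofReal ((n:ℝ) * ∑ k ∈ Finset.range (n + 1),
        (n.choose k : ℝ) * (if a ≤ (k:ℝ) ∧ (k:ℝ) ≤ b then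
          (k:ℝ)^(k-1) * ((lam/n)^(k-1) * Real.exp (-(lam/n))^(k*(n-k))) else 0)) := by
        rw [← ENNReal.ofReal_sum_of_nonneg, ENNReal.ofReal_mul (by positivity),
          ENNReal.ofReal_natCast]
        intro i _
        split_ifs
        · positivity
        · simp
    _ ≤ ENNReal.ofReal (2 / (n:ℝ)^100) :=
        ENNReal.ofReal_le_ofReal (sum_real_bound lam hlam n hn)
end

section
/- Let N ≥ 1 be an integer, let p ∈ (0, 1/2], let t ≥ 0 and set q = e^{−t}. Let ν be the product probability measure on {0,1}^N whose every coordinate equals 1 with probability p + q(1−p), and let π_p be the product measure on {0,1}^N whose every coordinate equals 1 with probability p. Then the total variation distance satisfies d_TV(ν, π_p) ≥ 1 − 2·exp(−q²·N/18). -/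
/-- The product measure on `{0,1}^N` with coordinate-`i` success probability `θ i`, as a mass
function. -/
noncomputable def prodMass {N : ℕ} (θ : Fin N → ℝ) (ω : Fin N → Bool) : ℝ :=
  ∏ i, if ω i then θ i else 1 - θ i

/-- Total variation distance between two mass functions on `{0,1}^N`. -/
noncomputable def tvDist {N : ℕ} (μ ν : (Fin N → Bool) → ℝ) : ℝ :=
  1 / 2 * ∑ ω : Fin N → Bool, |μ ω - ν ω|

open Real

lemma bern_denom_pos {a l : ℝ} (ha0 : 0 ≤ a) (ha1 : a ≤ 1) (hl : 0 ≤ l) :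
    0 < 1 + a * (Real.exp l - 1) := by
  have h1 : 1 ≤ Real.exp l := Real.one_le_exp hl
  nlinarith

lemma bern_mgf_nonneg {a : ℝ} (ha0 : 0 ≤ a) (ha1 : a ≤ 1) {l : ℝ} (hl : 0 ≤ l) :
    1 - a + a * Real.exp l ≤ Real.exp (a * l + l ^ 2 / 8) := by
  set d : ℝ → ℝ := fun y => 1 + a * (Real.exp y - 1) with hd
  have hdpos : ∀ x : ℝ, 0 ≤ x → 0 < d x := fun x hx => bern_denom_pos ha0 ha1 hx
  set G : ℝ → ℝ := fun y => a + y / 4 - a * Real.exp y / d y with hGdef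
  set F : ℝ → ℝ := fun y => a * y + y ^ 2 / 8 - Real.log (d y) with hFdef
  have hdD : ∀ x : ℝ, HasDerivAt d (a * Real.exp x) x := by
    intro x
    have := (((Real.hasDerivAt_exp x).sub_const 1).const_mul a).const_add 1
    exact this
  have hG : ∀ x : ℝ, 0 ≤ x →
      HasDerivAt G (1 / 4 - a * Real.exp x * (1 - a) / (d x) ^ 2) x := by
    intro x hx
    have hne : d x ≠ 0 := (hdpos x hx).ne'
    have h1 : HasDerivAt (fun y => a + y / 4) (1 / 4) x := by
      simpa using ((hasDerivAt_id x).div_const 4).const_add a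
    have h2 : HasDerivAt (fun y => a * Real.exp y) (a * Real.exp x) x :=
      (Real.hasDerivAt_exp x).const_mul a
    have h3 := h2.div (hdD x) hne
    have h4 := h1.sub h3
    refine h4.congr_deriv ?_
    simp only [hd]
    ring_nf
  have hGmono : MonotoneOn G (Set.Ici (0:ℝ)) := by
    apply monotoneOn_of_deriv_nonneg (convex_Ici 0)
    · intro x hx
      exact (hG x hx).continuousAt.continuousWithinAt
    · intro x hx
      rw [interior_Ici] at hx
      exact (hG x (le_of_lt hx)).differentiableAt.differentiableWithinAt
    · intro x hx
      rw [interior_Ici] at hx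
      rw [(hG x (le_of_lt hx)).deriv]
      have hdx := hdpos x (le_of_lt hx)
      have hu1 : a * Real.exp x * (1 - a) / (d x) ^ 2
          = (a * Real.exp x / d x) * ((1 - a) / d x) := by
        rw [div_mul_div_comm]; ring_nf
      set u := a * Real.exp x / d x with hu
      have hu0 : 0 ≤ u := by positivity
      have huu : (1 - a) / d x = 1 - u := by
        have h1 : d x - a * Real.exp x = 1 - a := by simp only [hd]; ring
        rw [hu, ← h1, sub_div, div_self hdx.ne']
      rw [hu1, huu]
      nlinarith [sq_nonneg (2 * u - 1)]
  have hG0 : G 0 = 0 := by simp [hGdef, hd]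
  have hGnn : ∀ x : ℝ, 0 ≤ x → 0 ≤ G x := by
    intro x hx
    have := hGmono (Set.self_mem_Ici) hx hx
    rwa [hG0] at this
  have hF : ∀ x : ℝ, 0 ≤ x → HasDerivAt F (G x) x := by
    intro x hx
    have hne : d x ≠ 0 := (hdpos x hx).ne'
    have h1 : HasDerivAt (fun y => a * y + y ^ 2 / 8) (a + x / 4) x := by
      have := ((hasDerivAt_id x).const_mul a).add ((hasDerivAt_pow 2 x).div_const 8)
      refine this.congr_deriv ?_
      simp; ring
    have h2 : HasDerivAt (fun y => Real.log (d y)) (a * Real.exp x / d x) x :=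
      (hdD x).log hne
    exact h1.sub h2
  have hFmono : MonotoneOn F (Set.Ici (0:ℝ)) := by
    apply monotoneOn_of_deriv_nonneg (convex_Ici 0)
    · intro x hx
      exact (hF x hx).continuousAt.continuousWithinAt
    · intro x hx
      rw [interior_Ici] at hx
      exact (hF x (le_of_lt hx)).differentiableAt.differentiableWithinAt
    · intro x hx
      rw [interior_Ici] at hx
      rw [(hF x (le_of_lt hx)).deriv]
      exact hGnn x (le_of_lt hx)
  have hF0 : F 0 = 0 := by simp [hFdef, hd]
  have hFl : 0 ≤ F l := by
    have := hFmono (Set.self_mem_Ici) hl hl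
    rwa [hF0] at this
  have hlog : Real.log (d l) ≤ a * l + l ^ 2 / 8 := by
    simp only [hFdef] at hFl; linarith
  have : d l ≤ Real.exp (a * l + l ^ 2 / 8) := by
    calc d l = Real.exp (Real.log (d l)) := (Real.exp_log (hdpos l hl)).symm
    _ ≤ _ := Real.exp_le_exp.mpr hlog
  calc 1 - a + a * Real.exp l = d l := by simp [hd]; ring
  _ ≤ _ := this

lemma bern_mgf {a : ℝ} (ha0 : 0 ≤ a) (ha1 : a ≤ 1) (l : ℝ) :
    1 - a + a * Real.exp l ≤ Real.exp (a * l + l ^ 2 / 8) := by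
  rcases le_or_gt 0 l with hl | hl
  · exact bern_mgf_nonneg ha0 ha1 hl
  · have h := bern_mgf_nonneg (a := 1 - a) (by linarith) (by linarith) (l := -l) (by linarith)
    have hkey : 1 - a + a * Real.exp l
        = Real.exp l * (1 - (1 - a) + (1 - a) * Real.exp (-l)) := by
      rw [Real.exp_neg]
      have := Real.exp_pos l
      field_simp
      ring
    rw [hkey]
    calc Real.exp l * (1 - (1 - a) + (1 - a) * Real.exp (-l))
        ≤ Real.exp l * Real.exp ((1 - a) * (-l) + (-l) ^ 2 / 8) := by
          apply mul_le_mul_of_nonneg_left h (le_of_lt (Real.exp_pos l))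
      _ = Real.exp (a * l + l ^ 2 / 8) := by
          rw [← Real.exp_add]; ring_nf

noncomputable def cnt {N : ℕ} (ω : Fin N → Bool) : ℝ := ∑ i, if ω i then (1:ℝ) else 0

lemma sum_prod_bool {N : ℕ} (f : Bool → ℝ) :
    ∑ ω : Fin N → Bool, ∏ i, f (ω i) = (f false + f true) ^ N := by
  rw [← Fintype.prod_sum (fun (_ : Fin N) (b : Bool) => f b)]
  simp [Fintype.sum_bool, add_comm (f true) (f false)]

lemma mgf_sum {N : ℕ} (c l : ℝ) :
    ∑ ω : Fin N → Bool, prodMass (fun _ => c) ω * Real.exp (l * cnt ω)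
      = ((1 - c) + c * Real.exp l) ^ N := by
  set f : Bool → ℝ := fun b => if b then c * Real.exp l else 1 - c with hf
  have h : ∀ ω : Fin N → Bool, prodMass (fun _ => c) ω * Real.exp (l * cnt ω)
      = ∏ i, f (ω i) := by
    intro ω
    rw [prodMass, cnt, Finset.mul_sum, Real.exp_sum, ← Finset.prod_mul_distrib]
    apply Finset.prod_congr rfl
    intro i _
    cases h : ω i <;> simp [h, hf]
  calc ∑ ω : Fin N → Bool, prodMass (fun _ => c) ω * Real.exp (l * cnt ω)
      = ∑ ω : Fin N → Bool, ∏ i, f (ω i) := Finset.sum_congr rfl (fun ω _ => h ω)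
    _ = (f false + f true) ^ N := sum_prod_bool f
    _ = ((1 - c) + c * Real.exp l) ^ N := by simp [hf]

lemma prodMass_total {N : ℕ} (c : ℝ) :
    ∑ ω : Fin N → Bool, prodMass (fun _ => c) ω = 1 := by
  have := mgf_sum (N := N) c 0
  simp at this
  simpa using this

lemma prodMass_nonneg {N : ℕ} {c : ℝ} (hc0 : 0 ≤ c) (hc1 : c ≤ 1) (ω : Fin N → Bool) :
    0 ≤ prodMass (fun _ => c) ω := by
  apply Finset.prod_nonneg
  intro i _
  cases h : ω i <;> simp [h] <;> linarith

lemma chernoff {N : ℕ} {c l m : ℝ} (hc0 : 0 ≤ c) (hc1 : c ≤ 1)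
    (A : Finset (Fin N → Bool)) (hA : ∀ ω ∈ A, 0 ≤ l * (cnt ω - m)) :
    ∑ ω ∈ A, prodMass (fun _ => c) ω
      ≤ Real.exp (-(l * m)) * ((1 - c) + c * Real.exp l) ^ N := by
  have step1 : ∑ ω ∈ A, prodMass (fun _ => c) ω
      ≤ ∑ ω ∈ A, prodMass (fun _ => c) ω * Real.exp (l * (cnt ω - m)) := by
    apply Finset.sum_le_sum
    intro ω hω
    nth_rewrite 1 [← mul_one (prodMass (fun _ => c) ω)]
    exact mul_le_mul_of_nonneg_left (Real.one_le_exp (hA ω hω)) (prodMass_nonneg hc0 hc1 ω)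
  have step2 : ∑ ω ∈ A, prodMass (fun _ => c) ω * Real.exp (l * (cnt ω - m))
      ≤ ∑ ω : Fin N → Bool, prodMass (fun _ => c) ω * Real.exp (l * (cnt ω - m)) := by
    apply Finset.sum_le_sum_of_subset_of_nonneg (Finset.subset_univ A)
    intro ω _ _
    exact mul_nonneg (prodMass_nonneg hc0 hc1 ω) (Real.exp_pos _).le
  have step3 : ∑ ω : Fin N → Bool, prodMass (fun _ => c) ω * Real.exp (l * (cnt ω - m))
      = Real.exp (-(l * m)) * ((1 - c) + c * Real.exp l) ^ N := by
    rw [← mgf_sum c l, Finset.mul_sum]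
    apply Finset.sum_congr rfl
    intro ω _
    rw [mul_sub, Real.exp_sub, Real.exp_neg]
    field_simp
  linarith

lemma tv_ge {N : ℕ} (μ ν : (Fin N → Bool) → ℝ) (hμ : ∑ ω, μ ω = 1)
    (hν : ∑ ω, ν ω = 1) (A : Finset (Fin N → Bool)) :
    (∑ ω ∈ A, μ ω) - ∑ ω ∈ A, ν ω ≤ tvDist μ ν := by
  have hsplit : ∀ f : (Fin N → Bool) → ℝ,
      ∑ ω ∈ A, f ω + ∑ ω ∈ Aᶜ, f ω = ∑ ω : Fin N → Bool, f ω :=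
    fun f => Finset.sum_add_sum_compl A f
  have h1 : ∑ ω ∈ A, (μ ω - ν ω) ≤ ∑ ω ∈ A, |μ ω - ν ω| :=
    Finset.sum_le_sum fun ω _ => le_abs_self _
  have h2 : -∑ ω ∈ Aᶜ, (μ ω - ν ω) ≤ ∑ ω ∈ Aᶜ, |μ ω - ν ω| := by
    rw [← Finset.sum_neg_distrib]
    exact Finset.sum_le_sum fun ω _ => neg_le_abs _
  have h3 := hsplit fun ω => |μ ω - ν ω|
  have h4 := hsplit fun ω => μ ω - ν ω
  have h5 : ∑ ω : Fin N → Bool, (μ ω - ν ω) = 0 := by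
    rw [Finset.sum_sub_distrib, hμ, hν]; ring
  have h6 : ∑ ω ∈ A, (μ ω - ν ω) = (∑ ω ∈ A, μ ω) - ∑ ω ∈ A, ν ω :=
    Finset.sum_sub_distrib _ _
  rw [tvDist]
  linarith

/-- Lower bound for the environment chain started from the all-ones configuration: with
`q = e^{-t}`, the total variation distance from stationarity is at least
`1 - 2 exp(-q² N / 18)`. -/
theorem environment_mixing_lower (N : ℕ) (hN : 1 ≤ N) (p : ℝ) (hp0 : 0 < p)
    (hp1 : p ≤ 1 / 2) (t : ℝ) (ht : 0 ≤ t) :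
    1 - 2 * Real.exp (-(Real.exp (-t) ^ 2 * N / 18)) ≤
      tvDist (prodMass fun _ : Fin N => p + Real.exp (-t) * (1 - p))
        (prodMass fun _ => p) := by
  set q : ℝ := Real.exp (-t) with hq
  have hq0 : 0 < q := Real.exp_pos _
  have hq1 : q ≤ 1 := Real.exp_le_one_iff.mpr (by linarith)
  set r : ℝ := p + q * (1 - p) with hr
  set ε : ℝ := q * (1 - p) / 2 with hε
  have hεpos : 0 < ε := by
    have : (0:ℝ) < 1 - p := by linarith
    positivity
  have hr2ε : r = p + 2 * ε := by rw [hr, hε]; ring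
  have hr0 : 0 ≤ r := by nlinarith
  have hr1 : r ≤ 1 := by nlinarith
  have hp1' : p ≤ 1 := by linarith
  have hN0 : (0:ℝ) ≤ (N:ℝ) := Nat.cast_nonneg N
  set m : ℝ := (N:ℝ) * (p + ε) with hm
  set A : Finset (Fin N → Bool) := Finset.univ.filter (fun ω => m ≤ cnt ω) with hA
  clear_value A m r ε q
  -- upper tail for the stationary measure
  have hπ : ∑ ω ∈ A, prodMass (fun _ => p) ω ≤ Real.exp (-(2 * ε ^ 2 * N)) := by
    have hch := chernoff (N := N) (c := p) (l := 4 * ε) (m := m) hp0.le hp1' A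
      (by
        intro ω hω
        rw [hA, Finset.mem_filter] at hω
        have := hω.2
        nlinarith)
    have hbase : (0:ℝ) ≤ (1 - p) + p * Real.exp (4 * ε) := by
      have := (Real.exp_pos (4 * ε)).le
      nlinarith
    have hmgf := bern_mgf hp0.le hp1' (4 * ε)
    calc ∑ ω ∈ A, prodMass (fun _ => p) ω
        ≤ Real.exp (-(4 * ε * m)) * ((1 - p) + p * Real.exp (4 * ε)) ^ N := hch
      _ ≤ Real.exp (-(4 * ε * m)) * (Real.exp (p * (4 * ε) + (4 * ε) ^ 2 / 8)) ^ N := by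
          apply mul_le_mul_of_nonneg_left _ (Real.exp_pos _).le
          exact pow_le_pow_left₀ hbase hmgf N
      _ = Real.exp (-(4 * ε * m) + (N:ℝ) * (p * (4 * ε) + (4 * ε) ^ 2 / 8)) := by
          rw [← Real.exp_nat_mul, ← Real.exp_add]
      _ = Real.exp (-(2 * ε ^ 2 * N)) := by
          congr 1
          rw [hm]; ring
  -- lower tail for the evolved measure
  have hν : ∑ ω ∈ Aᶜ, prodMass (fun _ => r) ω ≤ Real.exp (-(2 * ε ^ 2 * N)) := by
    have hch := chernoff (N := N) (c := r) (l := -(4 * ε)) (m := m) hr0 hr1 Aᶜ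
      (by
        intro ω hω
        rw [Finset.mem_compl, hA, Finset.mem_filter] at hω
        have h2 : ¬ m ≤ cnt ω := by
          intro h
          exact hω ⟨Finset.mem_univ ω, h⟩
        push_neg at h2
        nlinarith)
    have hbase : (0:ℝ) ≤ (1 - r) + r * Real.exp (-(4 * ε)) := by
      have := (Real.exp_pos (-(4 * ε))).le
      nlinarith
    have hmgf := bern_mgf hr0 hr1 (-(4 * ε))
    calc ∑ ω ∈ Aᶜ, prodMass (fun _ => r) ω
        ≤ Real.exp (-(-(4 * ε) * m)) * ((1 - r) + r * Real.exp (-(4 * ε))) ^ N := hch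
      _ ≤ Real.exp (-(-(4 * ε) * m)) *
            (Real.exp (r * (-(4 * ε)) + (-(4 * ε)) ^ 2 / 8)) ^ N := by
          apply mul_le_mul_of_nonneg_left _ (Real.exp_pos _).le
          exact pow_le_pow_left₀ hbase hmgf N
      _ = Real.exp (-(-(4 * ε) * m) + (N:ℝ) * (r * (-(4 * ε)) + (-(4 * ε)) ^ 2 / 8)) := by
          rw [← Real.exp_nat_mul, ← Real.exp_add]
      _ = Real.exp (-(2 * ε ^ 2 * N)) := by
          congr 1
          rw [hm, hr2ε]; ring
  have htotr := prodMass_total (N := N) r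
  have htotp := prodMass_total (N := N) p
  have hsplit : ∑ ω ∈ A, prodMass (fun _ => r) ω + ∑ ω ∈ Aᶜ, prodMass (fun _ => r) ω = 1 := by
    rw [Finset.sum_add_sum_compl]; exact htotr
  have hπnn : 0 ≤ ∑ ω ∈ A, prodMass (fun _ => p) ω :=
    Finset.sum_nonneg fun ω _ => prodMass_nonneg hp0.le hp1' ω
  have htv := tv_ge (prodMass (fun _ => r)) (prodMass (fun _ => p)) htotr htotp A
  have hexp : Real.exp (-(2 * ε ^ 2 * N)) ≤ Real.exp (-(q ^ 2 * N / 18)) := by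
    apply Real.exp_le_exp.mpr
    have h3 : (1/4 : ℝ) ≤ (1 - p) ^ 2 := by nlinarith
    have h2 : q ^ 2 / 8 ≤ 2 * ε ^ 2 := by
      have h4 := mul_le_mul_of_nonneg_left h3 (sq_nonneg q)
      rw [hε, div_pow, mul_pow]
      linarith
    have hqN : 0 ≤ q ^ 2 * (N:ℝ) := by positivity
    have h5 := mul_le_mul_of_nonneg_right h2 hN0
    nlinarith
  have : (1:ℝ) - 2 * Real.exp (-(q ^ 2 * N / 18))
      ≤ (∑ ω ∈ A, prodMass (fun _ => r) ω) - ∑ ω ∈ A, prodMass (fun _ => p) ω := by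
    linarith
  calc (1:ℝ) - 2 * Real.exp (-(q ^ 2 * N / 18))
      ≤ (∑ ω ∈ A, prodMass (fun _ => r) ω) - ∑ ω ∈ A, prodMass (fun _ => p) ω := this
    _ ≤ tvDist (prodMass (fun _ => r)) (prodMass (fun _ => p)) := htv
end

section
/- For all positive constants c_* and C_* there exists a constant C such that for all sufficiently large n the following holds. Let G be a graph on the vertex set {0,…,n−1} and let 𝒢 be a connected component of G satisfying: |𝒢| ≥ c_*·n; every vertex of 𝒢 has degree at most C_*·log n; and Φ_𝒢 ≥ c_*·(log n)^{−2}. Consider the continuous-time random walk on 𝒢 with generator matrix Q given by Q(x,y) = 1/(n−1) whenever {x,y} is an edge of 𝒢, Q(x,y) = 0 for distinct non-adjacent x,y ∈ 𝒢, and Q(x,x) = −deg_𝒢(x)/(n−1), with transition probabilities p_t = exp(t·Q). Then there exists t ≤ C·n·(log n)^6 such that max_{x,y ∈ 𝒢} |1 − |𝒢|·p_t(x,y)| ≤ 1/8. -/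
open scoped Classical
open scoped Matrix

/-- `d_H(S)`: the sum of the degrees of the vertices of `S`. -/
noncomputable def degSum {α : Type*} [Fintype α] (H : SimpleGraph α) (S : Set α) : ℝ :=
  ∑ x : α, if x ∈ S then ((H.neighborSet x).ncard : ℝ) else 0

/-- `|∂S|`: the number of edges of `H` with exactly one endpoint in `S`. -/
noncomputable def edgeBoundary {α : Type*} (H : SimpleGraph α) (S : Set α) : ℕ :=
  Set.ncard {p : α × α | p.1 ∈ S ∧ p.2 ∉ S ∧ H.Adj p.1 p.2}

section Helpers
variable {α : Type*} [Fintype α] (H : SimpleGraph α)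

lemma ncard_neighborSet (x : α) : (H.neighborSet x).ncard = H.degree x := by
  rw [← SimpleGraph.card_neighborSet_eq_degree, ← Nat.card_eq_fintype_card,
    Nat.card_coe_set_eq]

lemma degSum_eq_sum (S : Set α) :
    degSum H S = ∑ x, if x ∈ S then (H.degree x : ℝ) else 0 := by
  unfold degSum
  simp_rw [ncard_neighborSet]

lemma degSum_nonneg (S : Set α) : 0 ≤ degSum H S := by
  unfold degSum
  refine Finset.sum_nonneg fun x _ => ?_
  split <;> positivity

lemma degSum_mono {S T : Set α} (h : S ⊆ T) : degSum H S ≤ degSum H T := by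
  unfold degSum
  refine Finset.sum_le_sum fun x _ => ?_
  by_cases hx : x ∈ S
  · simp [hx, h hx]
  · simp only [hx, if_false]
    split <;> positivity

lemma degSum_compl (S : Set α) :
    degSum H S + degSum H Sᶜ = ∑ x, (H.degree x : ℝ) := by
  rw [degSum_eq_sum, degSum_eq_sum, ← Finset.sum_add_distrib]
  refine Finset.sum_congr rfl fun x _ => ?_
  by_cases hx : x ∈ S <;> simp [hx]

lemma degSum_univ : degSum H (Set.univ : Set α) = ∑ x, (H.degree x : ℝ) := by
  rw [degSum_eq_sum]; simp

lemma edgeSet_ncard_eq : (H.edgeSet.ncard : ℝ) = (H.edgeFinset.card : ℝ) := by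
  rw [← Nat.card_coe_set_eq, Nat.card_eq_fintype_card, SimpleGraph.edgeFinset_card]

lemma sum_degree_eq : (∑ x, (H.degree x : ℝ)) = 2 * H.edgeSet.ncard := by
  rw [edgeSet_ncard_eq]
  rw [← Nat.cast_sum]
  rw [SimpleGraph.sum_degrees_eq_twice_card_edges]
  push_cast
  ring

lemma edgeBoundary_eq_sum (S : Set α) :
    (edgeBoundary H S : ℝ) =
      ∑ u, ∑ v, (if u ∈ S ∧ v ∉ S ∧ H.Adj u v then (1 : ℝ) else 0) := by
  unfold edgeBoundary
  rw [Set.ncard_eq_toFinset_card', Set.toFinset_setOf, Finset.card_filter]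
  push_cast
  rw [Fintype.sum_prod_type]

lemma edgeBoundary_swap_eq_sum (S : Set α) :
    (edgeBoundary H S : ℝ) =
      ∑ u, ∑ v, (if u ∉ S ∧ v ∈ S ∧ H.Adj u v then (1 : ℝ) else 0) := by
  rw [edgeBoundary_eq_sum, Finset.sum_comm]
  refine Finset.sum_congr rfl fun u _ => Finset.sum_congr rfl fun v _ => ?_
  refine if_congr ?_ rfl rfl
  constructor
  · rintro ⟨h1, h2, h3⟩; exact ⟨h2, h1, h3.symm⟩
  · rintro ⟨h1, h2, h3⟩; exact ⟨h2, h1, h3.symm⟩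

lemma edgeBoundary_univ : (edgeBoundary H (Set.univ : Set α) : ℝ) = 0 := by
  rw [edgeBoundary_eq_sum]; simp

end Helpers

section Coarea
variable {α : Type*} [Fintype α] (H : SimpleGraph α)

lemma coarea (φ E : ℝ)
    (hiso : ∀ S : Set α, S.Nonempty → degSum H S ≤ E →
      φ * degSum H S ≤ (edgeBoundary H S : ℝ)) :
    ∀ k : ℕ, ∀ h : α → ℝ, (Finset.image h Finset.univ).card ≤ k → (∀ v, 0 ≤ h v) →
      degSum H {v | h v ≠ 0} ≤ E →
      2 * φ * (∑ v, (H.degree v : ℝ) * h v ^ 2) ≤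
        ∑ u, ∑ v, (if H.Adj u v then |h u ^ 2 - h v ^ 2| else 0) := by
  intro k
  induction k with
  | zero =>
      intro h himg _ _
      rcases isEmpty_or_nonempty α with hα | hα
      · simp
      · exfalso
        have : (Finset.image h Finset.univ).Nonempty :=
          ⟨h (Classical.arbitrary α), Finset.mem_image_of_mem h (Finset.mem_univ _)⟩
        have := Finset.card_pos.2 this
        omega
  | succ k ih =>
      intro h himg hpos hsupp
      by_cases hconst : ∀ u v : α, h u = h v
      · -- constant case
        rcases isEmpty_or_nonempty α with hα | hα
        · simp
        obtain ⟨w⟩ := hα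
        set c := h w with hc
        have hcv : ∀ v, h v = c := fun v => hconst v w
        by_cases hc0 : c = 0
        · have : ∀ v, h v = 0 := fun v => by rw [hcv v, hc0]
          have hL : (∑ v, (H.degree v : ℝ) * h v ^ 2) = 0 := by
            refine Finset.sum_eq_zero fun v _ => by rw [this v]; ring
          rw [hL, mul_zero]
          refine Finset.sum_nonneg fun u _ => Finset.sum_nonneg fun v _ => ?_
          split <;> positivity
        · have hsuppeq : {v : α | h v ≠ 0} = Set.univ := by
            ext v; simp [hcv v, hc0]
          have h1 : φ * degSum H Set.univ ≤ (edgeBoundary H (Set.univ : Set α) : ℝ) := by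
            refine hiso _ ⟨w, trivial⟩ ?_
            rw [← hsuppeq]; exact hsupp
          rw [edgeBoundary_univ] at h1
          have hL : 2 * φ * (∑ v, (H.degree v : ℝ) * h v ^ 2)
              = 2 * c ^ 2 * (φ * degSum H Set.univ) := by
            rw [degSum_univ, Finset.mul_sum, Finset.mul_sum]
            rw [Finset.mul_sum]
            refine Finset.sum_congr rfl fun v _ => by rw [hcv v]; ring
          rw [hL]
          have hr : (0:ℝ) ≤ ∑ u, ∑ v, (if H.Adj u v then |h u ^ 2 - h v ^ 2| else 0) := by
            refine Finset.sum_nonneg fun u _ => Finset.sum_nonneg fun v _ => ?_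
            split <;> positivity
          nlinarith [sq_nonneg c]
      · -- non-constant case
        push_neg at hconst
        obtain ⟨u₀, v₀, huv⟩ := hconst
        have hne : Nonempty α := ⟨u₀⟩
        set T := Finset.image h Finset.univ with hT
        have hTne : T.Nonempty := ⟨h u₀, Finset.mem_image_of_mem h (Finset.mem_univ _)⟩
        set M := T.max' hTne with hM
        have hMT : M ∈ T := T.max'_mem hTne
        have hT'ne : (T.erase M).Nonempty := by
          rcases ne_or_eq (h u₀) M with h0 | h0
          · exact ⟨h u₀, Finset.mem_erase.2 ⟨h0, Finset.mem_image_of_mem h (Finset.mem_univ _)⟩⟩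
          · refine ⟨h v₀, Finset.mem_erase.2 ⟨?_, Finset.mem_image_of_mem h (Finset.mem_univ _)⟩⟩
            rw [← h0]; exact fun hh => huv hh.symm
        set m := (T.erase M).max' hT'ne with hm
        have hmT : m ∈ T.erase M := (T.erase M).max'_mem hT'ne
        have hmM : m < M := lt_of_le_of_ne (T.le_max' m (Finset.mem_of_mem_erase hmT))
          (Finset.ne_of_mem_erase hmT)
        have hm0 : 0 ≤ m := by
          obtain ⟨v, _, hv⟩ := Finset.mem_image.1 (Finset.mem_of_mem_erase hmT)
          rw [← hv]; exact hpos v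
        have hM0 : 0 < M := lt_of_le_of_lt hm0 hmM
        set S : Set α := {v | h v = M} with hS
        obtain ⟨wM, _, hwM⟩ := Finset.mem_image.1 hMT
        have hSne : S.Nonempty := ⟨wM, hwM⟩
        -- every non-S vertex has h v ≤ m
        have hle : ∀ v, v ∉ S → h v ≤ m := by
          intro v hv
          refine (T.erase M).le_max' _ (Finset.mem_erase.2 ⟨hv, Finset.mem_image_of_mem h (Finset.mem_univ _)⟩)
        have hMv : ∀ v, h v ≤ M := fun v => T.le_max' _ (Finset.mem_image_of_mem h (Finset.mem_univ _))
        set h' : α → ℝ := fun v => min (h v) m with hh'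
        have hh'S : ∀ v, v ∈ S → h' v = m := fun v hv => by
          simp only [hh']; rw [min_eq_right]; rw [hv]; exact le_of_lt hmM
        have hh'nS : ∀ v, v ∉ S → h' v = h v := fun v hv => by
          simp only [hh']; rw [min_eq_left (hle v hv)]
        -- IH prerequisites
        have himg' : (Finset.image h' Finset.univ).card ≤ k := by
          have hsub : Finset.image h' Finset.univ ⊆ T.erase M := by
            intro x hx
            obtain ⟨v, _, hv⟩ := Finset.mem_image.1 hx
            by_cases hvS : v ∈ S
            · rw [← hv, hh'S v hvS]; exact hmT
            · rw [← hv, hh'nS v hvS]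
              exact Finset.mem_erase.2 ⟨hvS, Finset.mem_image_of_mem h (Finset.mem_univ _)⟩
          calc (Finset.image h' Finset.univ).card ≤ (T.erase M).card := Finset.card_le_card hsub
            _ = T.card - 1 := Finset.card_erase_of_mem hMT
            _ ≤ k := by omega
        have hpos' : ∀ v, 0 ≤ h' v := fun v => le_min (hpos v) hm0
        have hsupp' : degSum H {v | h' v ≠ 0} ≤ E := by
          refine le_trans (degSum_mono H ?_) hsupp
          intro v hv
          simp only [Set.mem_setOf_eq] at hv ⊢
          intro h0
          apply hv
          simp only [hh']
          rw [h0, min_eq_left hm0]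
        have IH := ih h' himg' hpos' hsupp'
        -- (A)
        have hA : (∑ v, (H.degree v : ℝ) * h v ^ 2)
            = (∑ v, (H.degree v : ℝ) * h' v ^ 2) + (M ^ 2 - m ^ 2) * degSum H S := by
          rw [degSum_eq_sum, Finset.mul_sum, ← Finset.sum_add_distrib]
          refine Finset.sum_congr rfl fun v _ => ?_
          by_cases hv : v ∈ S
          · rw [hh'S v hv, hv, if_pos hv]; ring
          · rw [hh'nS v hv, if_neg hv]; ring
        -- (B)
        have hB : (∑ u, ∑ v, (if H.Adj u v then |h u ^ 2 - h v ^ 2| else 0))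
            = (∑ u, ∑ v, (if H.Adj u v then |h' u ^ 2 - h' v ^ 2| else 0))
              + (M ^ 2 - m ^ 2) * (2 * (edgeBoundary H S : ℝ)) := by
          have key : ∀ u v : α, (if H.Adj u v then |h u ^ 2 - h v ^ 2| else 0)
              = (if H.Adj u v then |h' u ^ 2 - h' v ^ 2| else 0)
                + (M ^ 2 - m ^ 2) * ((if u ∈ S ∧ v ∉ S ∧ H.Adj u v then (1:ℝ) else 0)
                  + (if u ∉ S ∧ v ∈ S ∧ H.Adj u v then (1:ℝ) else 0)) := by
            intro u v
            by_cases hadj : H.Adj u v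
            · rw [if_pos hadj, if_pos hadj]
              by_cases hu : u ∈ S <;> by_cases hv : v ∈ S
              · rw [if_neg (by tauto), if_neg (by tauto)]
                rw [hh'S u hu, hh'S v hv, hu, hv]
                simp
              · rw [if_pos ⟨hu, hv, hadj⟩, if_neg (by tauto)]
                rw [hh'S u hu, hh'nS v hv, hu]
                have h1 : h v ≤ m := hle v hv
                have h2 : h v ^ 2 ≤ m ^ 2 := by nlinarith [hpos v]
                have h3 : h v ^ 2 ≤ M ^ 2 := by nlinarith
                rw [abs_of_nonneg (by linarith), abs_of_nonneg (by linarith)]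
                ring
              · rw [if_neg (by tauto), if_pos ⟨hu, hv, hadj⟩]
                rw [hh'nS u hu, hh'S v hv, hv]
                have h1 : h u ≤ m := hle u hu
                have h2 : h u ^ 2 ≤ m ^ 2 := by nlinarith [hpos u]
                have h3 : h u ^ 2 ≤ M ^ 2 := by nlinarith
                rw [abs_of_nonpos (by linarith), abs_of_nonpos (by linarith)]
                ring
              · rw [if_neg (by tauto), if_neg (by tauto)]
                rw [hh'nS u hu, hh'nS v hv]
                ring
            · rw [if_neg hadj, if_neg hadj, if_neg (by tauto), if_neg (by tauto)]
              ring
          have hbsum : ∑ u, ∑ v, ((if u ∈ S ∧ v ∉ S ∧ H.Adj u v then (1:ℝ) else 0)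
              + (if u ∉ S ∧ v ∈ S ∧ H.Adj u v then (1:ℝ) else 0))
              = 2 * (edgeBoundary H S : ℝ) := by
            simp_rw [Finset.sum_add_distrib]
            rw [← edgeBoundary_eq_sum, ← edgeBoundary_swap_eq_sum]
            ring
          simp_rw [key, Finset.sum_add_distrib, ← Finset.mul_sum]
          rw [hbsum]
        -- (C)
        have hC : φ * degSum H S ≤ (edgeBoundary H S : ℝ) := by
          refine hiso S hSne (le_trans (degSum_mono H ?_) hsupp)
          intro v hv
          simp only [Set.mem_setOf_eq] at hv ⊢
          rw [hv]
          exact ne_of_gt hM0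
        have hMm : (0:ℝ) ≤ M ^ 2 - m ^ 2 := by nlinarith
        rw [hA, hB]
        have hstep : 2 * φ * ((M ^ 2 - m ^ 2) * degSum H S)
            ≤ (M ^ 2 - m ^ 2) * (2 * (edgeBoundary H S : ℝ)) := by
          have := mul_le_mul_of_nonneg_left hC (by linarith : (0:ℝ) ≤ 2 * (M ^ 2 - m ^ 2))
          nlinarith
        nlinarith [IH]

lemma cheeger_support (φ : ℝ) (hφ : 0 ≤ φ)
    (hiso : ∀ S : Set α, S.Nonempty → degSum H S ≤ (H.edgeSet.ncard : ℝ) →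
      φ * degSum H S ≤ (edgeBoundary H S : ℝ))
    (h : α → ℝ) (hpos : ∀ v, 0 ≤ h v)
    (hsupp : degSum H {v | h v ≠ 0} ≤ (H.edgeSet.ncard : ℝ)) :
    φ ^ 2 * (∑ v, (H.degree v : ℝ) * h v ^ 2) ≤
      ∑ u, ∑ v, (if H.Adj u v then (h u - h v) ^ 2 else 0) := by
  set W := ∑ v, (H.degree v : ℝ) * h v ^ 2 with hW
  set Ener := ∑ u, ∑ v, (if H.Adj u v then (h u - h v) ^ 2 else 0) with hE
  have hWnn : 0 ≤ W := Finset.sum_nonneg fun v _ => by positivity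
  have hEnn : 0 ≤ Ener := Finset.sum_nonneg fun u _ => Finset.sum_nonneg fun v _ => by
    split <;> positivity
  have hcoarea := coarea H φ (H.edgeSet.ncard : ℝ) hiso (Finset.image h Finset.univ).card h
    le_rfl hpos hsupp
  -- Cauchy-Schwarz over pairs
  set F : α × α → ℝ := fun p => if H.Adj p.1 p.2 then |h p.1 - h p.2| else 0 with hF
  set G : α × α → ℝ := fun p => if H.Adj p.1 p.2 then h p.1 + h p.2 else 0 with hG
  have hFG : ∑ p : α × α, F p * G p
      = ∑ u, ∑ v, (if H.Adj u v then |h u ^ 2 - h v ^ 2| else 0) := by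
    rw [Fintype.sum_prod_type]
    refine Finset.sum_congr rfl fun u _ => Finset.sum_congr rfl fun v _ => ?_
    simp only [hF, hG]
    by_cases hadj : H.Adj u v
    · rw [if_pos hadj, if_pos hadj, if_pos hadj]
      rw [← abs_of_nonneg (add_nonneg (hpos u) (hpos v)), ← abs_mul]
      congr 1
      ring
    · simp [hadj]
  have hF2 : ∑ p : α × α, F p ^ 2 = Ener := by
    rw [hE, Fintype.sum_prod_type]
    refine Finset.sum_congr rfl fun u _ => Finset.sum_congr rfl fun v _ => ?_
    simp only [hF]
    by_cases hadj : H.Adj u v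
    · rw [if_pos hadj, if_pos hadj, sq_abs]
    · simp [hadj]
  have hsum_adj : ∀ g : α → ℝ, ∑ u, ∑ v, (if H.Adj u v then g u else 0)
      = ∑ u, (H.degree u : ℝ) * g u := by
    intro g
    refine Finset.sum_congr rfl fun u _ => ?_
    rw [SimpleGraph.degree_eq_sum_if_adj (R := ℝ), Finset.sum_mul]
    refine Finset.sum_congr rfl fun v _ => ?_
    split <;> ring
  have hsum_adj' : ∀ g : α → ℝ, ∑ u, ∑ v, (if H.Adj u v then g v else 0)
      = ∑ u, (H.degree u : ℝ) * g u := by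
    intro g
    rw [Finset.sum_comm]
    refine Finset.sum_congr rfl fun x _ => ?_
    have hsw : ∀ y, (if H.Adj y x then g x else 0) = (if H.Adj x y then g x else 0) :=
      fun y => if_congr (H.adj_comm y x) rfl rfl
    simp_rw [hsw]
    rw [SimpleGraph.degree_eq_sum_if_adj (R := ℝ), Finset.sum_mul]
    refine Finset.sum_congr rfl fun v _ => ?_
    split <;> ring
  have hG2 : ∑ p : α × α, G p ^ 2 ≤ 4 * W := by
    rw [Fintype.sum_prod_type]
    have hle : ∀ u v : α, (if H.Adj u v then h u + h v else 0) ^ 2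
        ≤ (if H.Adj u v then 2 * h u ^ 2 else 0) + (if H.Adj u v then 2 * h v ^ 2 else 0) := by
      intro u v
      by_cases hadj : H.Adj u v
      · simp only [if_pos hadj]; nlinarith [sq_nonneg (h u - h v)]
      · simp [hadj]
    calc ∑ u, ∑ v, G (u, v) ^ 2
        ≤ ∑ u, ∑ v, ((if H.Adj u v then 2 * h u ^ 2 else 0)
          + (if H.Adj u v then 2 * h v ^ 2 else 0)) := by
          refine Finset.sum_le_sum fun u _ => Finset.sum_le_sum fun v _ => hle u v
      _ = 4 * W := by
          simp_rw [Finset.sum_add_distrib]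
          rw [hsum_adj (fun u => 2 * h u ^ 2), hsum_adj' (fun u => 2 * h u ^ 2), hW]
          rw [Finset.mul_sum]
          rw [← Finset.sum_add_distrib]
          refine Finset.sum_congr rfl fun v _ => by ring
  have hCS := Finset.sum_mul_sq_le_sq_mul_sq Finset.univ F G
  rw [hFG, hF2] at hCS
  -- combine
  by_cases hW0 : W = 0
  · rw [hW0, mul_zero]; exact hEnn
  · have hWpos : 0 < W := lt_of_le_of_ne hWnn (Ne.symm hW0)
    have hsq : (2 * φ * W) ^ 2 ≤ Ener * (4 * W) := by
      calc (2 * φ * W) ^ 2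
          ≤ (∑ u, ∑ v, (if H.Adj u v then |h u ^ 2 - h v ^ 2| else 0)) ^ 2 := by
            apply pow_le_pow_left₀ (by positivity) hcoarea
        _ ≤ Ener * ∑ p : α × α, G p ^ 2 := hCS
        _ ≤ Ener * (4 * W) := mul_le_mul_of_nonneg_left hG2 hEnn
    nlinarith [hsq, hWpos]

lemma aux_split_sq (a b : ℝ) :
    (max a 0 - max b 0) ^ 2 + (max (-a) 0 - max (-b) 0) ^ 2 ≤ (a - b) ^ 2 := by
  rcases le_total a 0 with ha | ha <;> rcases le_total b 0 with hb | hb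
  · rw [max_eq_right ha, max_eq_right hb, max_eq_left (by linarith), max_eq_left (by linarith)]
    nlinarith
  · rw [max_eq_right ha, max_eq_left hb, max_eq_left (by linarith), max_eq_right (by linarith)]
    nlinarith [mul_nonneg hb (neg_nonneg.2 ha)]
  · rw [max_eq_left ha, max_eq_right hb, max_eq_right (by linarith), max_eq_left (by linarith)]
    nlinarith [mul_nonneg ha (neg_nonneg.2 hb)]
  · rw [max_eq_left ha, max_eq_left hb, max_eq_right (by linarith), max_eq_right (by linarith)]
    nlinarith

lemma aux_sq_decomp (a : ℝ) : (max a 0) ^ 2 + (max (-a) 0) ^ 2 = a ^ 2 := by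
  rcases le_total a 0 with ha | ha
  · rw [max_eq_right ha, max_eq_left (by linarith)]; ring
  · rw [max_eq_left ha, max_eq_right (by linarith)]; ring

lemma cheeger_gap [Nonempty α] (φ : ℝ) (hφ : 0 ≤ φ)
    (hiso : ∀ S : Set α, S.Nonempty → degSum H S ≤ (H.edgeSet.ncard : ℝ) →
      φ * degSum H S ≤ (edgeBoundary H S : ℝ))
    (hmindeg : ∀ v : α, (1 : ℝ) ≤ (H.degree v : ℝ))
    (f : α → ℝ) (hf : ∑ v, f v = 0) :
    φ ^ 2 / 2 * (∑ v, f v ^ 2)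
      ≤ (∑ u, ∑ v, (if H.Adj u v then (f u - f v) ^ 2 else 0)) / 2 := by
  classical
  -- median
  set E := (H.edgeSet.ncard : ℝ) with hEdef
  have hsum2E : ∑ x, (H.degree x : ℝ) = 2 * E := sum_degree_eq H
  have hEnn : 0 ≤ E := by positivity
  set vals := Finset.image f Finset.univ with hvals
  have hvne : vals.Nonempty := ⟨f (Classical.arbitrary α),
    Finset.mem_image_of_mem f (Finset.mem_univ _)⟩
  set A := vals.filter (fun x => E ≤ degSum H {v | f v ≤ x}) with hA
  have hAne : A.Nonempty := by
    refine ⟨vals.max' hvne, Finset.mem_filter.2 ⟨vals.max'_mem hvne, ?_⟩⟩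
    have : {v : α | f v ≤ vals.max' hvne} = Set.univ := by
      ext v
      simp only [Set.mem_setOf_eq, Set.mem_univ, iff_true]
      exact vals.le_max' _ (Finset.mem_image_of_mem f (Finset.mem_univ _))
    rw [this, degSum_univ, hsum2E]
    linarith
  set c := A.min' hAne with hc
  have hcA : c ∈ A := A.min'_mem hAne
  have hcup : E ≤ degSum H {v | f v ≤ c} := (Finset.mem_filter.1 hcA).2
  -- degSum {f > c} ≤ E
  have hup : degSum H {v | c < f v} ≤ E := by
    have hcompl : {v : α | c < f v} = {v : α | f v ≤ c}ᶜ := by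
      ext v; simp [not_le]
    rw [hcompl]
    have := degSum_compl H {v : α | f v ≤ c}
    rw [hsum2E] at this
    linarith
  -- degSum {f < c} ≤ E
  have hdown : degSum H {v | f v < c} ≤ E := by
    by_cases hne : {v : α | f v < c} = ∅
    · rw [hne]
      unfold degSum
      simp only [Set.mem_empty_iff_false, if_false, Finset.sum_const_zero]
      exact hEnn
    · obtain ⟨w, hw⟩ := Set.nonempty_iff_ne_empty.2 hne
      simp only [Set.mem_setOf_eq] at hw
      set B := vals.filter (fun x => x < c) with hB
      have hBne : B.Nonempty := ⟨f w, Finset.mem_filter.2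
        ⟨Finset.mem_image_of_mem f (Finset.mem_univ _), hw⟩⟩
      set c₂ := B.max' hBne with hc2
      have hc2B : c₂ ∈ B := B.max'_mem hBne
      have hc2lt : c₂ < c := (Finset.mem_filter.1 hc2B).2
      have hseteq : {v : α | f v < c} = {v : α | f v ≤ c₂} := by
        ext v
        simp only [Set.mem_setOf_eq]
        constructor
        · intro hv
          exact B.le_max' _ (Finset.mem_filter.2
            ⟨Finset.mem_image_of_mem f (Finset.mem_univ _), hv⟩)
        · intro hv; linarith
      rw [hseteq]
      by_contra hcon
      push_neg at hcon
      have : c₂ ∈ A := Finset.mem_filter.2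
        ⟨(Finset.mem_filter.1 hc2B).1, le_of_lt hcon⟩
      have := A.min'_le _ this
      linarith
  -- split f into positive and negative parts around c
  set gp : α → ℝ := fun v => max (f v - c) 0 with hgp
  set gm : α → ℝ := fun v => max (c - f v) 0 with hgm
  have hgppos : ∀ v, 0 ≤ gp v := fun v => le_max_right _ _
  have hgmpos : ∀ v, 0 ≤ gm v := fun v => le_max_right _ _
  have hgpsupp : degSum H {v | gp v ≠ 0} ≤ E := by
    refine le_trans (degSum_mono H ?_) hup
    intro v hv
    simp only [Set.mem_setOf_eq, hgp] at hv ⊢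
    by_contra hcon
    push_neg at hcon
    exact hv (max_eq_right (by linarith))
  have hgmsupp : degSum H {v | gm v ≠ 0} ≤ E := by
    refine le_trans (degSum_mono H ?_) hdown
    intro v hv
    simp only [Set.mem_setOf_eq, hgm] at hv ⊢
    by_contra hcon
    push_neg at hcon
    exact hv (max_eq_right (by linarith))
  have h1 := cheeger_support H φ hφ hiso gp hgppos hgpsupp
  have h2 := cheeger_support H φ hφ hiso gm hgmpos hgmsupp
  -- pointwise energy comparison
  have hEner : (∑ u, ∑ v, (if H.Adj u v then (gp u - gp v) ^ 2 else 0))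
      + (∑ u, ∑ v, (if H.Adj u v then (gm u - gm v) ^ 2 else 0))
      ≤ ∑ u, ∑ v, (if H.Adj u v then (f u - f v) ^ 2 else 0) := by
    rw [← Finset.sum_add_distrib]
    refine Finset.sum_le_sum fun u _ => ?_
    rw [← Finset.sum_add_distrib]
    refine Finset.sum_le_sum fun v _ => ?_
    by_cases hadj : H.Adj u v
    · simp only [if_pos hadj]
      have := aux_split_sq (f u - c) (f v - c)
      simp only [neg_sub] at this
      calc (gp u - gp v) ^ 2 + (gm u - gm v) ^ 2
          ≤ ((f u - c) - (f v - c)) ^ 2 := this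
        _ = (f u - f v) ^ 2 := by ring
    · simp [hadj]
  -- weighted mass identity
  have hmass : (∑ v, (H.degree v : ℝ) * gp v ^ 2) + (∑ v, (H.degree v : ℝ) * gm v ^ 2)
      = ∑ v, (H.degree v : ℝ) * (f v - c) ^ 2 := by
    rw [← Finset.sum_add_distrib]
    refine Finset.sum_congr rfl fun v _ => ?_
    have := aux_sq_decomp (f v - c)
    simp only [neg_sub] at this
    rw [← mul_add, this]
  have hw1 : ∑ v, (f v - c) ^ 2 ≤ ∑ v, (H.degree v : ℝ) * (f v - c) ^ 2 := by
    refine Finset.sum_le_sum fun v _ => ?_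
    nlinarith [hmindeg v, sq_nonneg (f v - c)]
  have hw2 : ∑ v, f v ^ 2 ≤ ∑ v, (f v - c) ^ 2 := by
    have hexp : ∑ v, (f v - c) ^ 2
        = ∑ v, f v ^ 2 - 2 * c * ∑ v, f v + (Fintype.card α : ℝ) * c ^ 2 := by
      have hterm : ∀ v, (f v - c) ^ 2 = f v ^ 2 - 2 * c * f v + c ^ 2 := fun v => by ring
      simp_rw [hterm]
      rw [Finset.sum_add_distrib, Finset.sum_sub_distrib, ← Finset.mul_sum,
        Finset.sum_const, Finset.card_univ, nsmul_eq_mul]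
    rw [hexp, hf]
    have : (0:ℝ) ≤ (Fintype.card α : ℝ) * c ^ 2 := by positivity
    linarith
  have hfinal : φ ^ 2 * ∑ v, f v ^ 2
      ≤ ∑ u, ∑ v, (if H.Adj u v then (f u - f v) ^ 2 else 0) := by
    calc φ ^ 2 * ∑ v, f v ^ 2
        ≤ φ ^ 2 * ∑ v, (H.degree v : ℝ) * (f v - c) ^ 2 := by
          apply mul_le_mul_of_nonneg_left (le_trans hw2 hw1) (by positivity)
      _ = φ ^ 2 * (∑ v, (H.degree v : ℝ) * gp v ^ 2)
          + φ ^ 2 * (∑ v, (H.degree v : ℝ) * gm v ^ 2) := by rw [← hmass]; ring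
      _ ≤ _ := by linarith [h1, h2, hEner]
  linarith

end Coarea

section Spectral

lemma spectral_bound {V : Type*} [Fintype V] [DecidableEq V] [Nonempty V]
    (A : Matrix V V ℝ) (hA : A.IsHermitian) (γ t : ℝ) (hγ : 0 < γ) (ht : 0 ≤ t)
    (h1 : A *ᵥ (fun _ => (1:ℝ)) = 0)
    (hgap : ∀ f : V → ℝ, ∑ v, f v = 0 → f ⬝ᵥ (A *ᵥ f) ≤ -(γ * ∑ v, f v ^ 2)) :
    ∀ x y : V, |NormedSpace.exp (t • A) x y - ((Fintype.card V : ℝ))⁻¹|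
      ≤ Real.exp (-(t * γ)) := by
  classical
  set N : ℝ := (Fintype.card V : ℝ) with hNdef
  have hNpos : 0 < N := by
    simp only [hNdef]
    exact_mod_cast Fintype.card_pos
  set U : Matrix V V ℝ := (hA.eigenvectorUnitary : Matrix V V ℝ) with hUdef
  set μ : V → ℝ := hA.eigenvalues with hμdef
  have hU2 : star U * U = 1 := by
    have := hA.eigenvectorUnitary.2
    exact this.1
  have hU1 : U * star U = 1 := by
    have := hA.eigenvectorUnitary.2
    exact this.2
  have hinv : U⁻¹ = star U := Matrix.inv_eq_left_inv hU2
  have hunit : IsUnit U := ⟨⟨U, star U, hU1, hU2⟩, rfl⟩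
  -- eigenvector entries
  set u : V → V → ℝ := fun i x => hA.eigenvectorBasis i x with hudef
  have hUapp : ∀ x i, U x i = u i x := fun x i => rfl
  have hstarUapp : ∀ i x, (star U) i x = u i x := by
    intro i x
    rw [Matrix.star_eq_conjTranspose, Matrix.conjTranspose_apply, star_trivial]
    exact hUapp x i
  have f_eig : ∀ i, A *ᵥ (u i) = fun x => μ i * u i x := by
    intro i
    have := hA.mulVec_eigenvectorBasis i
    funext x
    have hx := congr_fun this x
    simpa using hx
  -- orthonormality
  have horth : ∀ i j, ∑ x, u i x * u j x = if i = j then 1 else 0 := by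
    intro i j
    have h := orthonormal_iff_ite.mp hA.eigenvectorBasis.orthonormal i j
    rw [PiLp.inner_apply] at h
    simp only [RCLike.inner_apply, conj_trivial] at h
    rw [← h]
    exact Finset.sum_congr rfl fun x _ => by simp only [hudef]; ring
  have fact2 : ∀ i, ∑ x, u i x ^ 2 = 1 := by
    intro i
    have h := horth i i
    rw [if_pos rfl] at h
    rw [← h]
    exact Finset.sum_congr rfl fun x _ => by ring
  have fact4 : ∀ x, ∑ i, u i x ^ 2 = 1 := by
    intro x
    have := congr_fun (congr_fun hU1 x) x
    rw [Matrix.mul_apply] at this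
    simp only [Matrix.one_apply_eq] at this
    rw [← this]
    refine Finset.sum_congr rfl fun i _ => ?_
    rw [hstarUapp, hUapp]
    ring
  -- symmetry of A entrywise
  have hAsymm : ∀ x y, A x y = A y x := by
    intro x y
    have := hA.apply y x
    rw [star_trivial] at this
    exact this
  -- row sums of A are zero
  have hrow : ∀ y, ∑ x, A x y = 0 := by
    intro y
    have := congr_fun h1 y
    simp only [Matrix.mulVec, dotProduct, mul_one, Pi.zero_apply] at this
    rw [← this]
    exact Finset.sum_congr rfl fun x _ => hAsymm x y
  have fact1 : ∀ i, μ i * (∑ x, u i x) = 0 := by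
    intro i
    have e1 : ∑ x, (A *ᵥ u i) x = μ i * ∑ x, u i x := by
      rw [f_eig i, Finset.mul_sum]
    have e2 : ∑ x, (A *ᵥ u i) x = 0 := by
      simp only [Matrix.mulVec, dotProduct]
      rw [Finset.sum_comm]
      refine Finset.sum_eq_zero fun y _ => ?_
      rw [← Finset.sum_mul, hrow y, zero_mul]
    rw [← e1, e2]
  have fact5 : ∀ i, μ i ≠ 0 → μ i ≤ -γ := by
    intro i hi
    have hs : ∑ x, u i x = 0 := by
      rcases mul_eq_zero.1 (fact1 i) with h | h
      · exact absurd h hi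
      · exact h
    have := hgap (u i) hs
    rw [f_eig i] at this
    have hdot : u i ⬝ᵥ (fun x => μ i * u i x) = μ i := by
      simp only [dotProduct]
      have : ∀ x, u i x * (μ i * u i x) = μ i * u i x ^ 2 := fun x => by ring
      simp_rw [this, ← Finset.mul_sum, fact2 i, mul_one]
    rw [hdot] at this
    rw [fact2 i] at this
    linarith
  -- zero eigenvalue -> constant eigenvector
  have fact6 : ∀ i, μ i = 0 → ∃ c : ℝ, (∀ x, u i x = c) ∧ c ^ 2 = N⁻¹ := by
    intro i hi
    have hAu : A *ᵥ u i = 0 := by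
      rw [f_eig i]
      funext x
      rw [hi, zero_mul]
      rfl
    set si := ∑ x, u i x with hsi
    set g : V → ℝ := fun x => u i x - si / N with hg
    have hgsum : ∑ x, g x = 0 := by
      simp only [hg]
      rw [Finset.sum_sub_distrib, Finset.sum_const, Finset.card_univ, nsmul_eq_mul, ← hsi,
        ← hNdef]
      field_simp
      ring
    have hAg : A *ᵥ g = 0 := by
      have : g = u i - fun _ => si / N := rfl
      rw [this, Matrix.mulVec_sub, hAu]
      have hconst : (fun _ : V => si / N) = (si / N) • (fun _ : V => (1:ℝ)) := by
        funext x; simp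
      rw [hconst, Matrix.mulVec_smul, h1, smul_zero, sub_zero]
    have hgap' := hgap g hgsum
    rw [hAg, dotProduct_zero] at hgap'
    have hgsq : ∑ x, g x ^ 2 ≤ 0 := by
      by_contra hcon
      push_neg at hcon
      nlinarith
    have hgzero : ∀ x, g x = 0 := by
      intro x
      have hnn : ∀ x ∈ Finset.univ, (0:ℝ) ≤ g x ^ 2 := fun x _ => sq_nonneg _
      have := (Finset.sum_eq_zero_iff_of_nonneg hnn).1
        (le_antisymm hgsq (Finset.sum_nonneg hnn)) x (Finset.mem_univ x)
      exact pow_eq_zero_iff (by norm_num) |>.1 this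
    refine ⟨si / N, fun x => by have := hgzero x; simp only [hg] at this; linarith, ?_⟩
    have h2 := fact2 i
    have : ∀ x, u i x = si / N := fun x => by have := hgzero x; simp only [hg] at this; linarith
    simp_rw [this] at h2
    rw [Finset.sum_const, Finset.card_univ, nsmul_eq_mul, ← hNdef] at h2
    field_simp at h2 ⊢
    nlinarith
  -- existence of zero eigenvalue
  have fact7 : ∃ i₀, μ i₀ = 0 := by
    have hdet : A.det = 0 := by
      rw [← Matrix.exists_mulVec_eq_zero_iff]
      refine ⟨fun _ => 1, ?_, h1⟩
      intro hcon
      have := congr_fun hcon (Classical.arbitrary V)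
      norm_num at this
    have hprod := hA.det_eq_prod_eigenvalues
    rw [hdet] at hprod
    have : ∏ i, μ i = 0 := by exact_mod_cast hprod.symm
    obtain ⟨i₀, _, hi₀⟩ := Finset.prod_eq_zero_iff.1 this
    exact ⟨i₀, hi₀⟩
  obtain ⟨i₀, hi₀⟩ := fact7
  obtain ⟨c₀, hc₀, hc₀sq⟩ := fact6 i₀ hi₀
  -- uniqueness
  have fact8 : ∀ i, i ≠ i₀ → μ i ≤ -γ := by
    intro i hne
    refine fact5 i ?_
    intro hi
    obtain ⟨c, hc, hcsq⟩ := fact6 i hi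
    have horth' := horth i i₀
    rw [if_neg hne] at horth'
    have : ∑ x, u i x * u i₀ x = N * (c * c₀) := by
      have : ∀ x, u i x * u i₀ x = c * c₀ := fun x => by rw [hc x, hc₀ x]
      simp_rw [this]
      rw [Finset.sum_const, Finset.card_univ, nsmul_eq_mul, ← hNdef]
    rw [this] at horth'
    have hcc : c * c₀ = 0 := by
      rcases mul_eq_zero.1 horth' with h | h
      · exact absurd h (ne_of_gt hNpos)
      · exact h
    have hNinv : (0:ℝ) < N⁻¹ := by positivity
    rcases mul_eq_zero.1 hcc with h | h
    · rw [h] at hcsq; nlinarith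
    · rw [h] at hc₀sq; nlinarith
  -- matrix exponential entry formula
  have hexp : NormedSpace.exp (t • A)
      = U * Matrix.diagonal (fun i => Real.exp (t * μ i)) * star U := by
    have hspec : A = U * Matrix.diagonal μ * star U := by
      have h := hA.spectral_theorem
      rw [Unitary.conjStarAlgAut_apply] at h
      exact h
    have hdiagsmul : Matrix.diagonal (fun i => t * μ i) = t • Matrix.diagonal μ := by
      rw [← Matrix.diagonal_smul]
      congr 1
    have hsmul : t • A = U * Matrix.diagonal (fun i => t * μ i) * U⁻¹ := by
      rw [hinv, hspec, hdiagsmul, Matrix.mul_smul, Matrix.smul_mul]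
    rw [hsmul, Matrix.exp_conj _ _ hunit, hinv, Matrix.exp_diagonal]
    congr 2
    funext i
    rw [Pi.exp_def]
    rw [← Real.exp_eq_exp_ℝ]
  have hentry : ∀ x y, NormedSpace.exp (t • A) x y
      = ∑ i, Real.exp (t * μ i) * (u i x * u i y) := by
    intro x y
    rw [hexp, Matrix.mul_apply]
    refine Finset.sum_congr rfl fun i _ => ?_
    rw [Matrix.mul_diagonal, hstarUapp, hUapp]
    ring
  -- final estimate
  intro x y
  rw [hentry]
  have hsplit : ∑ i, Real.exp (t * μ i) * (u i x * u i y)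
      = (∑ i ∈ Finset.univ.erase i₀, Real.exp (t * μ i) * (u i x * u i y)) + N⁻¹ := by
    rw [← Finset.sum_erase_add Finset.univ _ (Finset.mem_univ i₀)]
    congr 1
    rw [hi₀, mul_zero, Real.exp_zero, one_mul, hc₀ x, hc₀ y, ← sq, hc₀sq]
  rw [hsplit, add_sub_cancel_right]
  have hterm : ∀ i ∈ Finset.univ.erase i₀,
      |Real.exp (t * μ i) * (u i x * u i y)| ≤ Real.exp (-(t * γ)) * (|u i x| * |u i y|) := by
    intro i hi
    have hμi := fact8 i (Finset.ne_of_mem_erase hi)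
    have hexp_le : Real.exp (t * μ i) ≤ Real.exp (-(t * γ)) := by
      apply Real.exp_le_exp.2
      have : t * μ i ≤ t * (-γ) := mul_le_mul_of_nonneg_left hμi ht
      linarith [this]
    rw [abs_mul, abs_mul, Real.abs_exp]
    exact mul_le_mul_of_nonneg_right hexp_le (by positivity)
  calc |∑ i ∈ Finset.univ.erase i₀, Real.exp (t * μ i) * (u i x * u i y)|
      ≤ ∑ i ∈ Finset.univ.erase i₀, |Real.exp (t * μ i) * (u i x * u i y)| :=
        Finset.abs_sum_le_sum_abs _ _
    _ ≤ ∑ i ∈ Finset.univ.erase i₀, Real.exp (-(t * γ)) * (|u i x| * |u i y|) :=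
        Finset.sum_le_sum hterm
    _ ≤ ∑ i, Real.exp (-(t * γ)) * (|u i x| * |u i y|) := by
        refine Finset.sum_le_sum_of_subset_of_nonneg (Finset.erase_subset _ _) ?_
        intro i _ _
        positivity
    _ = Real.exp (-(t * γ)) * ∑ i, |u i x| * |u i y| := by rw [Finset.mul_sum]
    _ ≤ Real.exp (-(t * γ)) * 1 := by
        refine mul_le_mul_of_nonneg_left ?_ (le_of_lt (Real.exp_pos _))
        have hcs := Finset.sum_mul_sq_le_sq_mul_sq Finset.univ (fun i => |u i x|)
          (fun i => |u i y|)
        simp only [sq_abs] at hcs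
        rw [fact4 x, fact4 y, mul_one] at hcs
        have hnn : (0:ℝ) ≤ ∑ i, |u i x| * |u i y| :=
          Finset.sum_nonneg fun i _ => by positivity
        nlinarith
    _ = Real.exp (-(t * γ)) := mul_one _

end Spectral

/-- The isoperimetric constant `Φ_H`. -/
noncomputable def isoConst {α : Type*} [Fintype α] (H : SimpleGraph α) : ℝ :=
  sInf {r : ℝ | ∃ S : Set α, S.Nonempty ∧ degSum H S ≤ (H.edgeSet.ncard : ℝ) ∧
    r = (edgeBoundary H S : ℝ) / degSum H S}

/-- The generator of the continuous-time walk on the component with vertex set `S`, jumping at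
rate `1/(n-1)` along every edge. -/
noncomputable def walkGen {n : ℕ} (G : SimpleGraph (Fin n)) (S : Set (Fin n)) :
    Matrix ↥S ↥S ℝ :=
  Matrix.of fun x y =>
    if x = y then -(((G.induce S).neighborSet x).ncard : ℝ) / ((n : ℝ) - 1)
    else if (G.induce S).Adj x y then 1 / ((n : ℝ) - 1) else 0

/-- Uniform mixing of the static walk on a good giant: the `1/8`-uniform mixing time of the
rate-`1/(n-1)`-per-edge continuous-time walk on a component of size `≥ c⋆ n`, max degree
`≤ C⋆ log n` and isoperimetric constant `≥ c⋆ (log n)⁻²`, is at most `C n (log n)⁶`. -/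
theorem static_walk_uniform_mixing (cs Cs : ℝ) (hcs : 0 < cs) (hCs : 0 < Cs) :
    ∃ C : ℝ, 0 < C ∧ ∃ n₀ : ℕ, ∀ n : ℕ, n₀ ≤ n →
      ∀ (G : SimpleGraph (Fin n)) (v : Fin n),
        cs * n ≤ ((G.connectedComponentMk v).supp.ncard : ℝ) →
        (∀ x ∈ (G.connectedComponentMk v).supp,
          ((G.neighborSet x).ncard : ℝ) ≤ Cs * Real.log n) →
        cs / Real.log n ^ 2 ≤ isoConst (G.induce (G.connectedComponentMk v).supp) →
        ∃ t : ℝ, 0 ≤ t ∧ t ≤ C * n * Real.log n ^ 6 ∧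
          ∀ x y : ↥(G.connectedComponentMk v).supp,
            |1 - ((G.connectedComponentMk v).supp.ncard : ℝ) *
                NormedSpace.exp (t • walkGen G (G.connectedComponentMk v).supp) x y| ≤
              1 / 8 := by
    classical
  refine ⟨8 / cs ^ 2, by positivity, max 3 ⌈2 / cs⌉₊, ?_⟩
  intro n hn G v hsize hdeg hΦ
  set 𝒮 : Set (Fin n) := (G.connectedComponentMk v).supp with h𝒮
  set H : SimpleGraph ↥𝒮 := G.induce 𝒮 with hH
  set Nr : ℝ := (𝒮.ncard : ℝ) with hNr
  set Lg : ℝ := Real.log n with hLg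
  -- basic size facts
  have hn3 : (3:ℕ) ≤ n := le_trans (le_max_left _ _) hn
  have hnR : (3:ℝ) ≤ (n:ℝ) := by exact_mod_cast hn3
  have hn1 : (0:ℝ) < (n:ℝ) - 1 := by linarith
  have hlog : 1 ≤ Lg := by
    rw [hLg, show (1:ℝ) = Real.log (Real.exp 1) from (Real.log_exp 1).symm]
    apply Real.log_le_log (Real.exp_pos 1)
    have := Real.exp_one_lt_d9
    linarith
  have hLgpos : 0 < Lg := lt_of_lt_of_le one_pos hlog
  have hceil : (2:ℝ) / cs ≤ (n:ℝ) := by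
    have h1 : ⌈2 / cs⌉₊ ≤ n := le_trans (le_max_right _ _) hn
    calc (2:ℝ) / cs ≤ (⌈2 / cs⌉₊ : ℝ) := Nat.le_ceil _
      _ ≤ (n:ℝ) := by exact_mod_cast h1
  have hcs2 : (2:ℝ) ≤ cs * n := by
    rw [div_le_iff₀ hcs] at hceil
    linarith [hceil]
  have hN2 : (2:ℝ) ≤ Nr := le_trans hcs2 hsize
  have hNpos : (0:ℝ) < Nr := by linarith
  have hNn : Nr ≤ (n:ℝ) := by
    have : 𝒮.ncard ≤ n := by
      calc 𝒮.ncard ≤ (Set.univ : Set (Fin n)).ncard :=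
            Set.ncard_le_ncard (Set.subset_univ _) (Set.toFinite _)
        _ = n := by rw [Set.ncard_univ, Nat.card_eq_fintype_card, Fintype.card_fin]
    rw [hNr]
    exact_mod_cast this
  have hcard : (Fintype.card ↥𝒮 : ℝ) = Nr := by
    rw [hNr, ← Nat.card_coe_set_eq, Nat.card_eq_fintype_card]
  have hne : Nonempty ↥𝒮 := by
    rw [← Fintype.card_pos_iff]
    by_contra hcon
    push_neg at hcon
    have h0 : Fintype.card ↥𝒮 = 0 := Nat.le_zero.mp hcon
    rw [h0] at hcard
    norm_num at hcard
    linarith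
  set φ : ℝ := cs / Lg ^ 2 with hφdef
  have hφpos : 0 < φ := by positivity
  -- lower bound on the isoperimetric ratios
  have hbdd : BddBelow {r : ℝ | ∃ S : Set ↥𝒮, S.Nonempty ∧
      degSum H S ≤ (H.edgeSet.ncard : ℝ) ∧
      r = (edgeBoundary H S : ℝ) / degSum H S} := by
    refine ⟨0, fun r hr => ?_⟩
    obtain ⟨S, _, _, hr⟩ := hr
    rw [hr]
    exact div_nonneg (by positivity) (degSum_nonneg H S)
  have hmem_le : ∀ S : Set ↥𝒮, S.Nonempty → degSum H S ≤ (H.edgeSet.ncard : ℝ) →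
      isoConst H ≤ (edgeBoundary H S : ℝ) / degSum H S := by
    intro S hS hSE
    exact csInf_le hbdd ⟨S, hS, hSE, rfl⟩
  have hiso : ∀ S : Set ↥𝒮, S.Nonempty → degSum H S ≤ (H.edgeSet.ncard : ℝ) →
      φ * degSum H S ≤ (edgeBoundary H S : ℝ) := by
    intro S hS hSE
    have hr := le_trans hΦ (hmem_le S hS hSE)
    rcases eq_or_lt_of_le (degSum_nonneg H S) with hd | hd
    · rw [← hd, div_zero] at hr
      linarith [hφpos]
    · rw [le_div_iff₀ hd] at hr
      linarith
  have hmindeg : ∀ x : ↥𝒮, (1:ℝ) ≤ (H.degree x : ℝ) := by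
    intro x
    by_contra hcon
    push_neg at hcon
    have hd0 : H.degree x = 0 := by
      by_contra hd
      have : 1 ≤ H.degree x := Nat.one_le_iff_ne_zero.2 hd
      have : (1:ℝ) ≤ (H.degree x : ℝ) := by exact_mod_cast this
      linarith
    have hds : degSum H ({x} : Set ↥𝒮) = 0 := by
      rw [degSum_eq_sum]
      refine Finset.sum_eq_zero fun y _ => ?_
      by_cases hy : y ∈ ({x} : Set ↥𝒮)
      · rw [if_pos hy]
        rw [Set.mem_singleton_iff] at hy
        rw [hy]
        exact_mod_cast hd0
      · rw [if_neg hy]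
    have h0mem : (0:ℝ) ∈ {r : ℝ | ∃ S : Set ↥𝒮, S.Nonempty ∧
        degSum H S ≤ (H.edgeSet.ncard : ℝ) ∧
        r = (edgeBoundary H S : ℝ) / degSum H S} := by
      refine ⟨{x}, Set.singleton_nonempty x, by rw [hds]; positivity, ?_⟩
      rw [hds, div_zero]
    have := csInf_le hbdd h0mem
    have : isoConst H ≤ 0 := this
    linarith [le_trans hΦ this, hφpos]
  -- the generator as a scaled Laplacian
  set A : Matrix ↥𝒮 ↥𝒮 ℝ := walkGen G 𝒮 with hAdef
  have hAeq : A = (-(1/((n:ℝ)-1))) • H.lapMatrix ℝ := by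
    ext x y
    rw [hAdef]
    unfold walkGen
    rw [Matrix.smul_apply]
    rw [SimpleGraph.lapMatrix]
    rw [Matrix.sub_apply]
    by_cases hxy : x = y
    · subst hxy
      rw [Matrix.of_apply, if_pos rfl]
      rw [SimpleGraph.degMatrix, Matrix.diagonal_apply_eq, SimpleGraph.adjMatrix_apply,
        if_neg (H.irrefl), ncard_neighborSet]
      rw [smul_eq_mul]
      field_simp
      simp only [sub_zero, neg_inj, Nat.cast_inj]
      congr 1
    · rw [Matrix.of_apply, if_neg hxy]
      rw [SimpleGraph.degMatrix, Matrix.diagonal_apply_ne _ hxy, SimpleGraph.adjMatrix_apply]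
      by_cases hadj : H.Adj x y
      · rw [if_pos hadj, if_pos hadj]
        rw [smul_eq_mul]
        field_simp
        ring
      · rw [if_neg hadj, if_neg hadj]
        simp
  have hLherm : (H.lapMatrix ℝ).IsHermitian := (H.posSemidef_lapMatrix ℝ).1
  have hAherm : A.IsHermitian := by
    rw [hAeq]
    show ((-(1/((n:ℝ)-1))) • H.lapMatrix ℝ)ᴴ = _
    rw [Matrix.conjTranspose_smul, hLherm.eq, star_trivial]
  have h1 : A *ᵥ (fun _ => (1:ℝ)) = 0 := by
    rw [hAeq, Matrix.smul_mulVec, H.lapMatrix_mulVec_const_eq_zero, smul_zero]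
  set γ : ℝ := φ ^ 2 / (2 * ((n:ℝ) - 1)) with hγdef
  have hγpos : 0 < γ := by positivity
  have hgap : ∀ f : ↥𝒮 → ℝ, ∑ w, f w = 0 →
      f ⬝ᵥ (A *ᵥ f) ≤ -(γ * ∑ w, f w ^ 2) := by
    intro f hf
    have hch := cheeger_gap H φ (le_of_lt hφpos) hiso hmindeg f hf
    rw [hAeq, Matrix.smul_mulVec, dotProduct_smul, smul_eq_mul]
    rw [← Matrix.toLinearMap₂'_apply', SimpleGraph.lapMatrix_toLinearMap₂']
    have hc : -(1/((n:ℝ)-1)) < 0 := by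
      apply neg_neg_iff_pos.mpr
      positivity
    have hmul := mul_le_mul_of_nonpos_left hch (le_of_lt hc)
    have hγeq : (1/((n:ℝ)-1)) * (φ ^ 2 / 2) = γ := by
      rw [hγdef, div_mul_div_comm, one_mul, mul_comm ((n:ℝ)-1) 2]
    calc -(1/((n:ℝ)-1)) * ((∑ w, ∑ w', (if H.Adj w w' then (f w - f w') ^ 2 else 0)) / 2)
        ≤ -(1/((n:ℝ)-1)) * (φ ^ 2 / 2 * ∑ w, f w ^ 2) := hmul
      _ = -(γ * ∑ w, f w ^ 2) := by rw [← hγeq]; ring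
  -- choose the time
  set t : ℝ := Real.log (8 * Nr) / γ with htdef
  have h8N : (1:ℝ) ≤ 8 * Nr := by linarith
  have hlog8N : 0 ≤ Real.log (8 * Nr) := Real.log_nonneg h8N
  have ht0 : 0 ≤ t := div_nonneg hlog8N (le_of_lt hγpos)
  have htγ : t * γ = Real.log (8 * Nr) := div_mul_cancel₀ _ (ne_of_gt hγpos)
  refine ⟨t, ht0, ?_, ?_⟩
  · -- t ≤ C n log^6 n
    have hlog8Nle : Real.log (8 * Nr) ≤ 4 * Lg := by
      rw [Real.log_mul (by norm_num) (ne_of_gt hNpos)]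
      have h8 : Real.log 8 ≤ 3 := by
        rw [show (8:ℝ) = 2^3 by norm_num, Real.log_pow]
        have := Real.log_two_lt_d9
        push_cast
        nlinarith
      have hNlog : Real.log Nr ≤ Lg := Real.log_le_log hNpos hNn
      linarith [hlog]
    have hγval : γ = cs ^ 2 / (Lg ^ 4 * (2 * ((n:ℝ) - 1))) := by
      rw [hγdef, hφdef, div_pow, div_div]
      congr 1
      ring
    have htval : t = Real.log (8 * Nr) * (Lg ^ 4 * (2 * ((n:ℝ) - 1))) / cs ^ 2 := by
      rw [htdef, hγval, div_div_eq_mul_div]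
    rw [htval]
    have hnum : Real.log (8 * Nr) * (Lg ^ 4 * (2 * ((n:ℝ) - 1))) ≤ 8 * n * Lg ^ 6 := by
      have hfac : (0:ℝ) ≤ Lg ^ 4 * (2 * ((n:ℝ) - 1)) := by positivity
      calc Real.log (8 * Nr) * (Lg ^ 4 * (2 * ((n:ℝ) - 1)))
          ≤ (4 * Lg) * (Lg ^ 4 * (2 * ((n:ℝ) - 1))) :=
            mul_le_mul_of_nonneg_right hlog8Nle hfac
        _ ≤ (4 * Lg) * (Lg ^ 4 * (2 * (n:ℝ))) := by
            refine mul_le_mul_of_nonneg_left ?_ (by positivity)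
            refine mul_le_mul_of_nonneg_left ?_ (by positivity)
            linarith
        _ = 8 * n * Lg ^ 5 := by ring
        _ ≤ 8 * n * Lg ^ 6 := by
            refine mul_le_mul_of_nonneg_left ?_ (by positivity)
            exact pow_le_pow_right₀ hlog (by norm_num)
    calc Real.log (8 * Nr) * (Lg ^ 4 * (2 * ((n:ℝ) - 1))) / cs ^ 2
        ≤ (8 * n * Lg ^ 6) / cs ^ 2 :=
          (div_le_div_iff_of_pos_right (by positivity)).2 hnum
      _ = 8 / cs ^ 2 * n * Lg ^ 6 := by ring
  · -- uniform mixing bound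
    intro x y
    haveI := hne
    have hsb := spectral_bound A hAherm γ t hγpos ht0 h1 hgap x y
    rw [hcard] at hsb
    have habs : |1 - Nr * NormedSpace.exp (t • A) x y|
        = Nr * |NormedSpace.exp (t • A) x y - Nr⁻¹| := by
      calc |1 - Nr * NormedSpace.exp (t • A) x y|
          = |Nr * NormedSpace.exp (t • A) x y - 1| := abs_sub_comm _ _
        _ = |Nr * (NormedSpace.exp (t • A) x y - Nr⁻¹)| := by
            rw [mul_sub, mul_inv_cancel₀ (ne_of_gt hNpos)]
        _ = |Nr| * |NormedSpace.exp (t • A) x y - Nr⁻¹| := abs_mul _ _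
        _ = Nr * |NormedSpace.exp (t • A) x y - Nr⁻¹| := by rw [abs_of_pos hNpos]
    rw [habs]
    have hexpval : Real.exp (-(t * γ)) = (8 * Nr)⁻¹ := by
      rw [htγ, Real.exp_neg, Real.exp_log (by linarith : (0:ℝ) < 8 * Nr)]
    calc Nr * |NormedSpace.exp (t • A) x y - Nr⁻¹|
        ≤ Nr * Real.exp (-(t * γ)) := mul_le_mul_of_nonneg_left hsb (le_of_lt hNpos)
      _ = 1 / 8 := by
          rw [hexpval, mul_inv]
          rw [show Nr * (8⁻¹ * Nr⁻¹) = (Nr * Nr⁻¹) * 8⁻¹ by ring,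
            mul_inv_cancel₀ (ne_of_gt hNpos), one_mul]
          norm_num
end
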